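/- arXiv:1303.2527 — 4 statements merged into one kernel-verified Lean document; each statement's English description precedes it below -/
import Mathlib

section
/- Let φ(z) = Σ_{n≥1} B_n zⁿ be analytic and injective on the open unit disk U = {z ∈ ℂ : |z| < 1} with φ(0) = 0 and with image φ(U) a convex set, and let h(z) = Σ_{n≥1} h_n zⁿ be analytic on U with h(0) = 0. If h is subordinate to φ on U, then |h_n| ≤ |B₁| for every n ≥ 1, i.e. |h⁽ⁿ⁾(0)/n!| ≤ |φ'(0)| for all n ∈ ℕ, n ≥ 1. -/
open Metric Filter Function Set Complex
open scoped Topology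



/-- Taylor coefficient from a power series at 0. -/
lemma taylor_coeff_eq {f : ℂ → ℂ} {p : FormalMultilinearSeries ℂ ℂ ℂ}
    (hp : HasFPowerSeriesAt f p 0) (n : ℕ) :
    iteratedDeriv n f 0 = (n.factorial : ℂ) * p.coeff n := by
  obtain ⟨r, hr⟩ := hp
  have h := hr.factorial_smul (1 : ℂ) n
  rw [iteratedDeriv_eq_iteratedFDeriv, ← h, FormalMultilinearSeries.coeff]
  simp [nsmul_eq_mul]

lemma dslope_congr {f g : ℂ → ℂ} (h : f =ᶠ[𝓝 0] g) : dslope f 0 =ᶠ[𝓝 0] dslope g 0 := by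
  obtain ⟨t, htf, hto, ht0⟩ := _root_.eventually_nhds_iff.mp h
  refine _root_.eventually_nhds_iff.mpr ⟨t, ?_, hto, ht0⟩
  intro z hz
  rcases eq_or_ne z 0 with rfl | hz0
  · simp only [dslope_same]; exact h.deriv_eq
  · rw [dslope_of_ne _ hz0, dslope_of_ne _ hz0, slope_def_field, slope_def_field,
      htf z hz, htf 0 ht0]

lemma dslope_pow_mul {G : ℂ → ℂ} (hG : DifferentiableAt ℂ G 0) (k : ℕ) :
    dslope (fun z => z ^ (k+1) * G z) 0 = fun z => z ^ k * G z := by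
  funext z
  rcases eq_or_ne z 0 with rfl | hz0
  · rw [dslope_same]
    have hd : HasDerivAt (fun z : ℂ => z ^ (k+1) * G z)
        ((((k:ℂ)+1) * 0 ^ k) * G 0 + 0 ^ (k+1) * deriv G 0) 0 := by
      have h1 : HasDerivAt (fun z : ℂ => z ^ (k+1)) (((k:ℂ)+1) * 0 ^ k) 0 := by
        simpa using hasDerivAt_pow (k+1) (0:ℂ)
      exact h1.mul hG.hasDerivAt
    rw [hd.deriv]
    rcases Nat.eq_zero_or_pos k with rfl | hk
    · simp
    · simp [zero_pow hk.ne', zero_pow (Nat.succ_ne_zero k)]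
  · rw [dslope_of_ne _ hz0, slope_def_field]
    field_simp
    ring



/-- Coefficient extraction: if `f z = z^m * G z` near `0`, with `G` analytic, then the
coefficients of a power series of `f` below `m` vanish and the `m`-th is `G 0`. -/
lemma coeff_of_factor {f G : ℂ → ℂ} {p : FormalMultilinearSeries ℂ ℂ ℂ} {m : ℕ}
    (hp : HasFPowerSeriesAt f p 0) (hG : AnalyticAt ℂ G 0)
    (hf : f =ᶠ[𝓝 0] fun z => z ^ m * G z) :
    (∀ j < m, p.coeff j = 0) ∧ p.coeff m = G 0 := by
  have key : ∀ j, j ≤ m → (swap dslope (0:ℂ))^[j] f =ᶠ[𝓝 0] fun z => z ^ (m - j) * G z := by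
    intro j
    induction j with
    | zero => intro _; simpa using hf
    | succ j ih =>
      intro hj
      have hij := ih (Nat.le_of_succ_le hj)
      rw [Function.iterate_succ_apply']
      have h1 : dslope ((swap dslope (0:ℂ))^[j] f) 0 =ᶠ[𝓝 0]
          dslope (fun z => z ^ (m - j) * G z) 0 := dslope_congr hij
      have hk : m - j = (m - (j+1)) + 1 := by omega
      have h2 : dslope (fun z => z ^ (m - j) * G z) 0 = fun z => z ^ (m - (j+1)) * G z := by
        rw [hk]; exact dslope_pow_mul hG.differentiableAt _
      exact h1.trans (by rw [h2])
  have hcoeff : ∀ j, j ≤ m → p.coeff j = 0 ^ (m - j) * G 0 := by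
    intro j hj
    have h1 := (hp.has_fpower_series_iterate_dslope_fslope j).coeff_zero (fun _ => (1:ℂ))
    have h2 : p.coeff j = (FormalMultilinearSeries.fslope^[j] p).coeff 0 := by
      rw [FormalMultilinearSeries.coeff_iterate_fslope, zero_add]
    rw [h2, FormalMultilinearSeries.coeff]
    have h3 : ((swap dslope (0:ℂ))^[j] f) 0 = 0 ^ (m - j) * G 0 := (key j hj).eq_of_nhds
    rw [← h3]
    exact h1
  constructor
  · intro j hjm
    rw [hcoeff j hjm.le, zero_pow (by omega : m - j ≠ 0), zero_mul]
  · rw [hcoeff m le_rfl, Nat.sub_self, pow_zero, one_mul]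


/-- Power series of `z ↦ f (c * z)` for `‖c‖ = 1`. -/
lemma hasFPowerSeriesAt_scale {f : ℂ → ℂ} {P : FormalMultilinearSeries ℂ ℂ ℂ}
    (hf : HasFPowerSeriesAt f P 0) {c : ℂ} (hc : ‖c‖ = 1) :
    HasFPowerSeriesAt (fun z => f (c * z)) (fun j => c ^ j • P j) 0 := by
  obtain ⟨r, hr⟩ := hf
  have hc' : ‖c‖₊ = 1 := by ext; exact hc
  set Q : FormalMultilinearSeries ℂ ℂ ℂ := fun j => c ^ j • P j with hQdef
  have hn : ∀ j, ‖Q j‖ = ‖P j‖ := by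
    intro j
    have h1 : ‖Q j‖ = ‖c ^ j‖ * ‖P j‖ := norm_smul (c ^ j) (P j)
    rw [h1, norm_pow, hc, one_pow, one_mul]
  refine ⟨r, ?_, hr.r_pos, ?_⟩
  · have hrad : Q.radius = P.radius := by
      unfold FormalMultilinearSeries.radius
      simp only [hn]
    rw [hrad]; exact hr.r_le
  · intro y hy
    have hy' : c * y ∈ Metric.eball (0:ℂ) r := by
      rw [EMetric.mem_ball, edist_zero_right] at hy ⊢
      rw [enorm_mul, enorm_eq_nnnorm c, hc', ENNReal.coe_one, one_mul]
      exact hy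
    have hs := hr.hasSum hy'
    have hterm : ∀ j, Q j (fun _ => y) = P j (fun _ => c * y) := by
      intro j
      have h1 : Q j (fun _ => y) = c ^ j • (P j fun _ => y) :=
        ContinuousMultilinearMap.smul_apply _ _ _
      rw [h1]
      have h2 : (fun _ : Fin j => c * y) = fun i : Fin j => c • y := rfl
      rw [h2, ContinuousMultilinearMap.map_smul_univ]
      simp [Finset.prod_const]
    show HasSum (fun j => Q j fun _ => y) (f (c * (0 + y)))
    rw [zero_add]
    have hz : f (c * y) = f (0 + c * y) := by rw [zero_add]
    rw [hz]
    simpa only [hterm] using hs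

lemma hasFPowerSeriesAt_constMul {f : ℂ → ℂ} {P : FormalMultilinearSeries ℂ ℂ ℂ}
    (hf : HasFPowerSeriesAt f P 0) (a : ℂ) :
    HasFPowerSeriesAt (fun z => a * f z) (fun j => a • P j) 0 := by
  obtain ⟨r, hr⟩ := hf
  set Q : FormalMultilinearSeries ℂ ℂ ℂ := fun j => a • P j with hQdef
  refine ⟨r, ?_, hr.r_pos, ?_⟩
  · refine ENNReal.le_of_forall_nnreal_lt fun t ht => ?_
    have ht' : (t : ENNReal) < P.radius := ht.trans_le hr.r_le
    obtain ⟨C, hC, hbound⟩ := P.norm_mul_pow_le_of_lt_radius ht'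
    refine FormalMultilinearSeries.le_radius_of_bound _ (‖a‖ * C) fun j => ?_
    have h1 : ‖Q j‖ = ‖a‖ * ‖P j‖ := norm_smul a (P j)
    rw [h1]
    have := hbound j
    nlinarith [norm_nonneg a, norm_nonneg (P j), pow_nonneg t.2 j]
  · intro y hy
    have hs := (hr.hasSum hy).mul_left a
    have hterm : ∀ j, Q j (fun _ => y) = a * (P j fun _ => y) := by
      intro j
      have h1 : Q j (fun _ => y) = a • (P j fun _ => y) :=
        ContinuousMultilinearMap.smul_apply _ _ _
      rw [h1, smul_eq_mul]
    show HasSum (fun j => Q j fun _ => y) ((fun z => a * f z) (0 + y))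
    simpa only [hterm] using hs

lemma hasFPowerSeriesAt_sum {α : Type} {s : Finset α} {f : α → ℂ → ℂ}
    {P : α → FormalMultilinearSeries ℂ ℂ ℂ}
    (hf : ∀ a ∈ s, HasFPowerSeriesAt (f a) (P a) 0) :
    HasFPowerSeriesAt (fun z => ∑ a ∈ s, f a z) (∑ a ∈ s, P a) 0 := by
  classical
  induction s using Finset.cons_induction with
  | empty =>
    simp only [Finset.sum_empty]
    have h0 : HasFPowerSeriesAt (fun _ : ℂ => (0:ℂ))
        (constFormalMultilinearSeries ℂ ℂ (0:ℂ)) 0 := hasFPowerSeriesAt_const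
    convert h0 using 1
    ext j v
    cases j <;> simp [constFormalMultilinearSeries]
  | cons a s ha ih =>
    simp only [Finset.sum_cons]
    exact (hf a (Finset.mem_cons_self a s)).add (ih fun b hb => hf b (Finset.mem_cons_of_mem hb))


/-- An injective analytic function on the unit disk has nonvanishing derivative. -/
lemma deriv_ne_zero_of_injOn {φ : ℂ → ℂ}
    (hφ_an : AnalyticOnNhd ℂ φ (ball 0 1)) (hφ_inj : Set.InjOn φ (ball 0 1))
    {z₀ : ℂ} (hz₀ : z₀ ∈ ball (0:ℂ) 1) : deriv φ z₀ ≠ 0 := by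
  intro hd
  have hDo : IsOpen (ball (0:ℂ) 1) := isOpen_ball
  have hDn : ball (0:ℂ) 1 ∈ 𝓝 z₀ := hDo.mem_nhds hz₀
  have hfa : AnalyticAt ℂ (fun z => φ z - φ z₀) z₀ := (hφ_an z₀ hz₀).sub analyticAt_const
  -- not eventually zero
  have hne : ¬ ∀ᶠ z in 𝓝 z₀, φ z - φ z₀ = 0 := by
    intro hev
    have h1 : ∀ᶠ z in 𝓝[≠] z₀, z ∈ ball (0:ℂ) 1 ∧ φ z - φ z₀ = 0 :=
      ((hDo.eventually_mem hz₀).and hev).filter_mono nhdsWithin_le_nhds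
    have h2 : ∀ᶠ z in 𝓝[≠] z₀, z ≠ z₀ := eventually_mem_nhdsWithin
    obtain ⟨z, ⟨hzD, hz0⟩, hzne⟩ := (h1.and h2).exists
    exact hzne (hφ_inj hzD hz₀ (sub_eq_zero.mp hz0))
  have horder : analyticOrderAt (fun z => φ z - φ z₀) z₀ ≠ ⊤ := by
    rw [Ne, analyticOrderAt_eq_top]; exact hne
  obtain ⟨n, hn⟩ := ENat.ne_top_iff_exists.mp horder
  obtain ⟨g, hg_an, hg0, hfg⟩ := (hfa.analyticOrderAt_eq_natCast (n := n)).mp hn.symm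
  -- n ≥ 2
  have hn0 : n ≠ 0 := by
    rintro rfl
    have := hfg.self_of_nhds
    simp at this
    exact hg0 this.symm
  have hn1 : n ≠ 1 := by
    rintro rfl
    have hder : deriv (fun z => φ z - φ z₀) z₀ = deriv (fun z => (z - z₀) ^ 1 • g z) z₀ :=
      Filter.EventuallyEq.deriv_eq hfg
    rw [deriv_sub_const, hd] at hder
    have hca : HasDerivAt (fun z => (z - z₀) ^ 1 • g z) (g z₀) z₀ := by
      have h1 : HasDerivAt (fun z : ℂ => (z - z₀) * g z)
          (1 * g z₀ + (z₀ - z₀) * deriv g z₀) z₀ :=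
        ((hasDerivAt_id z₀).sub_const z₀).mul hg_an.differentiableAt.hasDerivAt
      simpa using h1
    rw [hca.deriv] at hder
    exact hg0 hder.symm
  have hn2 : 2 ≤ n := by omega
  -- n-th root of g
  set c := g z₀ with hc
  set ρ : ℂ → ℂ := fun z => Complex.exp ((Complex.log (g z / c) + Complex.log c) / n) with hρ
  have hρ_an : AnalyticAt ℂ ρ z₀ := by
    apply AnalyticAt.cexp
    apply AnalyticAt.div _ analyticAt_const (by exact_mod_cast (by omega : n ≠ 0))
    apply AnalyticAt.add _ analyticAt_const
    apply (analyticAt_clog _).comp (hg_an.div analyticAt_const hg0)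
    show c / c ∈ slitPlane
    rw [div_self hg0]
    exact Complex.one_mem_slitPlane
  have hρ0 : ρ z₀ ≠ 0 := Complex.exp_ne_zero _
  have hρ_pow : ∀ z, g z ≠ 0 → ρ z ^ n = g z := by
    intro z hz
    rw [hρ]
    rw [← Complex.exp_nat_mul]
    have hnne : (n:ℂ) ≠ 0 := by exact_mod_cast (by omega : n ≠ 0)
    rw [mul_div_cancel₀ _ hnne, Complex.exp_add,
      Complex.exp_log (div_ne_zero hz hg0), Complex.exp_log hg0,
      div_mul_cancel₀ _ hg0]
  set F : ℂ → ℂ := fun z => (z - z₀) * ρ z with hF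
  have hF_an : AnalyticAt ℂ F z₀ := (analyticAt_id.sub analyticAt_const).mul hρ_an
  have hF0 : F z₀ = 0 := by simp [hF]
  have hFd : deriv F z₀ = ρ z₀ := by
    have h1 : HasDerivAt F (1 * ρ z₀ + (z₀ - z₀) * deriv ρ z₀) z₀ :=
      ((hasDerivAt_id z₀).sub_const z₀).mul hρ_an.differentiableAt.hasDerivAt
    rw [h1.deriv]; ring
  have hFev : ∀ᶠ z in 𝓝 z₀, z ∈ ball (0:ℂ) 1 ∧ φ z = φ z₀ + F z ^ n := by
    have hgne : ∀ᶠ z in 𝓝 z₀, g z ≠ 0 := hg_an.continuousAt.eventually_ne hg0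
    filter_upwards [hfg, hgne, hDo.eventually_mem hz₀] with z h1 h2 h3
    refine ⟨h3, ?_⟩
    have h4 : F z ^ n = (z - z₀) ^ n * g z := by
      rw [hF, mul_pow, hρ_pow z h2]
    rw [h4]
    rw [smul_eq_mul] at h1
    linear_combination h1
  have hmap : 𝓝 (0:ℂ) ≤ map F (𝓝 z₀) := by
    rcases hF_an.eventually_constant_or_nhds_le_map_nhds_aux with hconst | hmap
    · exfalso
      have : deriv F z₀ = deriv (fun _ => F z₀) z₀ := Filter.EventuallyEq.deriv_eq hconst
      rw [deriv_const] at this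
      exact hρ0 (hFd.symm.trans this)
    · rwa [hF0] at hmap
  have hS : {z | z ∈ ball (0:ℂ) 1 ∧ φ z = φ z₀ + F z ^ n} ∈ 𝓝 z₀ := hFev
  have hFS : F '' {z | z ∈ ball (0:ℂ) 1 ∧ φ z = φ z₀ + F z ^ n} ∈ 𝓝 (0:ℂ) :=
    hmap (image_mem_map hS)
  obtain ⟨δ, hδ, hball⟩ := Metric.mem_nhds_iff.mp hFS
  -- roots of unity
  set ζ : ℂ := Complex.exp (2 * Real.pi * Complex.I / n) with hζdef
  have hζ : IsPrimitiveRoot ζ n := Complex.isPrimitiveRoot_exp n (by omega)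
  have hζn : ζ ^ n = 1 := hζ.pow_eq_one
  have hζ1 : ζ ≠ 1 := by
    intro h
    have := hζ.pow_ne_one_of_pos_of_lt (by omega : 1 ≠ 0) (by omega : 1 < n)
    rw [pow_one] at this
    exact this h
  have hζa : ‖ζ‖ = 1 := by
    have h1 : (2 * (Real.pi:ℂ) * Complex.I / n) = ((2 * Real.pi / n : ℝ) : ℂ) * Complex.I := by
      push_cast; ring
    rw [hζdef] at *
    rw [show (2 * ↑Real.pi * Complex.I / ↑n : ℂ) = ((2 * Real.pi / n : ℝ) : ℂ) * Complex.I
      from by push_cast; ring]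
    exact Complex.norm_exp_ofReal_mul_I _
  set u : ℂ := ((δ/2 : ℝ) : ℂ) with hu
  have hu0 : u ≠ 0 := by
    rw [hu]
    exact_mod_cast (by positivity : (δ/2:ℝ) ≠ 0)
  have huδ : u ∈ ball (0:ℂ) δ := by
    rw [hu, mem_ball, dist_zero_right, Complex.norm_real, Real.norm_eq_abs,
      abs_of_pos (by positivity : (0:ℝ) < δ/2)]
    linarith
  have hζuδ : ζ * u ∈ ball (0:ℂ) δ := by
    simp only [mem_ball, dist_zero_right] at huδ ⊢
    rw [norm_mul]
    rw [show ‖ζ‖ = 1 from hζa]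
    simpa using huδ
  obtain ⟨a, haS, haF⟩ := hball huδ
  obtain ⟨b, hbS, hbF⟩ := hball hζuδ
  have hab : φ a = φ b := by
    rw [haS.2, hbS.2, haF, hbF, mul_pow, hζn, one_mul]
  have heq : a = b := hφ_inj haS.1 hbS.1 hab
  rw [heq] at haF
  have hzu : ζ * u = u := by rw [← hbF, haF]
  have h2 : (ζ - 1) * u = 0 := by linear_combination hzu
  rcases mul_eq_zero.mp h2 with h | h
  · exact hζ1 (sub_eq_zero.mp h)
  · exact hu0 h



/-- Rogosinski's lemma: if `h ≺ φ` on the unit disk, where `φ` is convex univalent with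
`φ(0) = 0`, then every Taylor coefficient of `h` at `0` is bounded by `|φ'(0)|`. -/
theorem rogosinski_coeff_bound
    (φ h : ℂ → ℂ)
    (hφ_an : AnalyticOnNhd ℂ φ (ball 0 1)) (hφ0 : φ 0 = 0)
    (hφ_inj : Set.InjOn φ (ball 0 1))
    (hφ_cvx : Convex ℝ (φ '' ball 0 1))
    (hh_an : AnalyticOnNhd ℂ h (ball 0 1)) (hh0 : h 0 = 0)
    (hsub : ∃ ω : ℂ → ℂ, AnalyticOnNhd ℂ ω (ball 0 1) ∧ ω 0 = 0 ∧
      (∀ z ∈ ball (0 : ℂ) 1, ‖ω z‖ < 1) ∧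
      ∀ z ∈ ball (0 : ℂ) 1, h z = φ (ω z)) :
    ∀ n : ℕ, 1 ≤ n →
      ‖iteratedDeriv n h 0 / (n.factorial : ℂ)‖ ≤ ‖deriv φ 0‖ := by
  obtain ⟨ω, hω_an, hω0, hω_lt, hωφ⟩ := hsub
  intro n hn1
  have hDo : IsOpen (ball (0:ℂ) 1) := isOpen_ball
  have h0D : (0:ℂ) ∈ ball (0:ℂ) 1 := by simp
  have hd0 : deriv φ 0 ≠ 0 := deriv_ne_zero_of_injOn hφ_an hφ_inj h0D
  -- the inverse function of φ
  set ψ : ℂ → ℂ := Function.invFunOn φ (ball 0 1) with hψdef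
  have hψ_left : ∀ x ∈ ball (0:ℂ) 1, ψ (φ x) = x := fun x hx => hφ_inj.leftInvOn_invFunOn hx
  have hψ_mem : ∀ w ∈ φ '' ball (0:ℂ) 1, ψ w ∈ ball (0:ℂ) 1 := by
    rintro w ⟨x, hx, rfl⟩; exact Function.invFunOn_mem ⟨x, hx, rfl⟩
  have hψ_right : ∀ w ∈ φ '' ball (0:ℂ) 1, φ (ψ w) = w := by
    rintro w ⟨x, hx, rfl⟩; exact Function.invFunOn_eq ⟨x, hx, rfl⟩
  have hψ_diff : ∀ w ∈ φ '' ball (0:ℂ) 1, DifferentiableAt ℂ ψ w := by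
    rintro w ⟨x, hx, rfl⟩
    have hsd : HasStrictDerivAt φ (deriv φ x) x :=
      ((hφ_an x hx).contDiffAt (n := 1)).hasStrictDerivAt one_ne_zero
    have hdx : deriv φ x ≠ 0 := deriv_ne_zero_of_injOn hφ_an hφ_inj hx
    have e := hsd.hasStrictFDerivAt_equiv hdx
    set g : ℂ → ℂ := e.localInverse _ _ _ with hgdef
    have hgx : g (φ x) = x := e.localInverse_apply_image
    have hgc : ContinuousAt g (φ x) := e.localInverse_continuousAt
    have hgd : DifferentiableAt ℂ g (φ x) := e.to_localInverse.differentiableAt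
    have hev : ψ =ᶠ[𝓝 (φ x)] g := by
      have h1 : ∀ᶠ y in 𝓝 (φ x), φ (g y) = y := e.eventually_right_inverse
      have h2 : ∀ᶠ y in 𝓝 (φ x), g y ∈ ball (0:ℂ) 1 := by
        have := hgc.eventually_mem (hDo.mem_nhds (show g (φ x) ∈ ball (0:ℂ) 1 from by rw [hgx]; exact hx))
        exact this
      filter_upwards [h1, h2] with y hy1 hy2
      calc ψ y = ψ (φ (g y)) := by rw [hy1]
      _ = g y := hψ_left _ hy2
    exact hev.symm.differentiableAt_iff.mp hgd
  -- power series of h at 0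
  obtain ⟨P, hP⟩ := hh_an 0 h0D
  -- roots of unity
  set ζ : ℂ := Complex.exp (2 * Real.pi * Complex.I / n) with hζdef
  have hζ : IsPrimitiveRoot ζ n := Complex.isPrimitiveRoot_exp n (by omega)
  have hζn : ζ ^ n = 1 := hζ.pow_eq_one
  have hζa : ‖ζ‖ = 1 := by
    rw [hζdef, show (2 * ↑Real.pi * Complex.I / ↑n : ℂ) = ((2 * Real.pi / n : ℝ) : ℂ) * Complex.I
      from by push_cast; ring]
    exact Complex.norm_exp_ofReal_mul_I _
  -- the averaged function p
  set p : ℂ → ℂ := fun z => ∑ k ∈ Finset.range n, (n:ℂ)⁻¹ * h (ζ ^ k * z) with hpdef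
  have hnne : (n:ℂ) ≠ 0 := by exact_mod_cast (by omega : n ≠ 0)
  set R : FormalMultilinearSeries ℂ ℂ ℂ :=
    ∑ k ∈ Finset.range n, (fun j => (n:ℂ)⁻¹ • ((ζ ^ k) ^ j • P j)) with hRdef
  have hp_series : HasFPowerSeriesAt p R 0 := by
    apply hasFPowerSeriesAt_sum
    intro k _
    have h1 := hasFPowerSeriesAt_scale hP (c := ζ ^ k) (by rw [norm_pow, hζa, one_pow])
    exact hasFPowerSeriesAt_constMul h1 ((n:ℂ)⁻¹)
  -- coefficients of R
  have hRcoeff : ∀ j, R.coeff j = (∑ k ∈ Finset.range n, (ζ ^ j) ^ k) * ((n:ℂ)⁻¹ * P.coeff j) := by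
    intro j
    have h1 : R.coeff j = ∑ k ∈ Finset.range n, (n:ℂ)⁻¹ * ((ζ ^ k) ^ j * P.coeff j) := by
      rw [hRdef]
      unfold FormalMultilinearSeries.coeff
      erw [Finset.sum_apply, ContinuousMultilinearMap.sum_apply]
      apply Finset.sum_congr rfl
      intro k _
      rw [ContinuousMultilinearMap.smul_apply, ContinuousMultilinearMap.smul_apply,
        smul_eq_mul, smul_eq_mul]
    rw [h1, Finset.sum_mul]
    apply Finset.sum_congr rfl
    intro k _
    rw [pow_right_comm]
    ring
  have hRn : R.coeff n = P.coeff n := by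
    rw [hRcoeff n]
    rw [Finset.sum_congr rfl (fun k _ => by rw [hζn, one_pow] : ∀ k ∈ Finset.range n, (ζ^n)^k = 1),
      Finset.sum_const, Finset.card_range, nsmul_eq_mul, mul_one]
    field_simp
  have hRlow : ∀ j, 1 ≤ j → j < n → R.coeff j = 0 := by
    intro j hj1 hj2
    rw [hRcoeff j]
    have hzj : ζ ^ j ≠ 1 := hζ.pow_ne_one_of_pos_of_lt (by omega) hj2
    rw [geom_sum_eq hzj,
      show (ζ^j)^n = 1 from by rw [← pow_mul, mul_comm, pow_mul, hζn, one_pow]]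
    simp
  -- p maps the disk into φ '' D
  have hp0 : p 0 = 0 := by simp [hpdef, hh0]
  have hmem_disk : ∀ (k : ℕ), ∀ z ∈ ball (0:ℂ) 1, ζ ^ k * z ∈ ball (0:ℂ) 1 := by
    intro k z hz
    rw [mem_ball_zero_iff] at hz ⊢
    rw [norm_mul, norm_pow, hζa, one_pow, one_mul]
    exact hz
  have hpΩ : ∀ z ∈ ball (0:ℂ) 1, p z ∈ φ '' ball (0:ℂ) 1 := by
    intro z hz
    have hrw : p z = ∑ k ∈ Finset.range n, ((n:ℝ)⁻¹) • h (ζ ^ k * z) := by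
      rw [hpdef]
      apply Finset.sum_congr rfl
      intro k _
      rw [Complex.real_smul]
      push_cast
      ring
    rw [hrw]
    refine hφ_cvx.sum_mem (fun k _ => by positivity) ?_ ?_
    · rw [Finset.sum_const, Finset.card_range, nsmul_eq_mul, mul_inv_cancel₀]
      exact_mod_cast (by omega : n ≠ 0)
    · intro k _
      have hzk := hmem_disk k z hz
      rw [hωφ _ hzk]
      exact ⟨ω (ζ ^ k * z), mem_ball_zero_iff.mpr (hω_lt _ hzk), rfl⟩
  have hp_diff : DifferentiableOn ℂ p (ball (0:ℂ) 1) := by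
    intro z hz
    apply DifferentiableAt.differentiableWithinAt
    apply DifferentiableAt.fun_sum
    intro k _
    apply DifferentiableAt.const_mul
    exact ((hh_an _ (hmem_disk k z hz)).differentiableAt).comp z
      ((differentiableAt_id.const_mul _))
  -- the subordination function σ = ψ ∘ p
  set σ : ℂ → ℂ := fun z => ψ (p z) with hσdef
  have hσ_diff : DifferentiableOn ℂ σ (ball (0:ℂ) 1) := by
    intro z hz
    exact (((hψ_diff _ (hpΩ z hz)).comp z ((hp_diff z hz).differentiableAt
      (hDo.mem_nhds hz)))).differentiableWithinAt
  have hσ0 : σ 0 = 0 := by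
    show ψ (p 0) = 0
    rw [hp0]
    conv_lhs => rw [← hφ0]
    exact hψ_left 0 h0D
  have hσD : ∀ z ∈ ball (0:ℂ) 1, σ z ∈ ball (0:ℂ) 1 := fun z hz => hψ_mem _ (hpΩ z hz)
  have hpφσ : ∀ z ∈ ball (0:ℂ) 1, p z = φ (σ z) := fun z hz => (hψ_right _ (hpΩ z hz)).symm
  have hσ_an : AnalyticAt ℂ σ 0 := hσ_diff.analyticAt (hDo.mem_nhds h0D)
  obtain ⟨Q, hQ⟩ := hσ_an
  -- the factor v of φ
  obtain ⟨Pφ, hPφ⟩ := hφ_an 0 h0D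
  set v : ℂ → ℂ := dslope φ 0 with hvdef
  have hv_an : AnalyticAt ℂ v 0 := ⟨Pφ.fslope, hPφ.has_fpower_series_dslope_fslope⟩
  have hv0 : v 0 = deriv φ 0 := dslope_same φ 0
  have hφv : ∀ y : ℂ, φ y = y * v y := by
    intro y
    rcases eq_or_ne y 0 with rfl | hy0
    · simp [hφ0]
    · rw [hvdef, dslope_of_ne _ hy0, slope_def_field, hφ0]
      field_simp
      ring
  -- final norm computation helper
  have hfinal : ‖iteratedDeriv n h 0 / (n.factorial : ℂ)‖ = ‖R.coeff n‖ := by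
    rw [taylor_coeff_eq hP n, ← hRn, mul_comm, mul_div_cancel_right₀ _
      (by exact_mod_cast n.factorial_ne_zero : (n.factorial : ℂ) ≠ 0)]
  by_cases hQ0 : Q = 0
  · -- σ vanishes identically near 0
    have hσev : ∀ᶠ z in 𝓝 0, σ z = 0 := hQ.locally_zero_iff.mpr hQ0
    have hpev : p =ᶠ[𝓝 0] fun z => z ^ (n+1) * (fun _ => (0:ℂ)) z := by
      filter_upwards [hσev, hDo.eventually_mem h0D] with z h1 h2
      rw [hpφσ z h2, h1, hφ0]
      simp
    obtain ⟨hlow, -⟩ := coeff_of_factor hp_series analyticAt_const hpev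
    rw [hfinal, hlow n (by omega)]
    simp
  · -- factor σ through its order
    set m : ℕ := Q.order with hmdef
    set s : ℂ → ℂ := (swap dslope 0)^[m] σ with hsdef
    have hs_an : AnalyticAt ℂ s 0 := ⟨_, hQ.has_fpower_series_iterate_dslope_fslope m⟩
    have hs0 : s 0 ≠ 0 := hQ.iterate_dslope_fslope_ne_zero hQ0
    have hσfac : σ =ᶠ[𝓝 0] fun z => z ^ m * s z := by
      have := hQ.eq_pow_order_mul_iterate_dslope
      filter_upwards [Filter.Eventually.of_forall this] with z hz
      rw [hz]
      simp [hsdef, smul_eq_mul]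
      rfl
    have hm1 : 1 ≤ m := by
      by_contra hc
      have hm0 : m = 0 := by omega
      have := hσfac.eq_of_nhds
      rw [hσ0, hm0] at this
      simp at this
      exact hs0 this.symm
    set G : ℂ → ℂ := fun z => s z * v (σ z) with hGdef
    have hG_an : AnalyticAt ℂ G 0 := by
      apply hs_an.mul
      have h2 : AnalyticAt ℂ v (σ 0) := by rw [hσ0]; exact hv_an
      exact h2.comp ⟨Q, hQ⟩
    have hG0 : G 0 = s 0 * deriv φ 0 := by
      rw [hGdef]
      show s 0 * v (σ 0) = s 0 * deriv φ 0
      rw [hσ0, hv0]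
    have hpfac : p =ᶠ[𝓝 0] fun z => z ^ m * G z := by
      filter_upwards [hσfac, hDo.eventually_mem h0D] with z h1 h2
      calc p z = σ z * v (σ z) := by rw [hpφσ z h2, hφv (σ z)]
      _ = (z ^ m * s z) * v (σ z) := congrArg (fun t => t * v (σ z)) h1
      _ = z ^ m * G z := by
          show _ = z ^ m * (s z * v (σ z))
          ring
    obtain ⟨hplow, hpm⟩ := coeff_of_factor hp_series hG_an hpfac
    rcases lt_trichotomy m n with hlt | heq | hgt
    · exfalso
      have h1 : R.coeff m = 0 := hRlow m hm1 hlt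
      rw [hpm, hG0] at h1
      exact (mul_ne_zero hs0 hd0) h1
    · -- the main case
      obtain ⟨-, hσm⟩ := coeff_of_factor hQ hs_an hσfac
      -- Cauchy estimates: ‖Q.coeff m‖ ≤ r⁻¹ ^ m for all 0 < r < 1
      have hcauchy : ∀ r : ℝ, 0 < r → r < 1 → ‖Q.coeff m‖ ≤ r⁻¹ ^ m := by
        intro r hr0 hr1
        lift r to NNReal using hr0.le with r' hr'
        have hsub : closedBall (0:ℂ) r' ⊆ ball (0:ℂ) 1 := closedBall_subset_ball hr1
        have hdσ : DifferentiableOn ℂ σ (closedBall (0:ℂ) r') := hσ_diff.mono hsub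
        have hball := hdσ.hasFPowerSeriesOnBall (show 0 < r' from by exact_mod_cast hr0)
        have hEq : cauchyPowerSeries σ 0 r' = Q :=
          hball.hasFPowerSeriesAt.eq_formalMultilinearSeries hQ
        have h1 : ‖Q.coeff m‖ ≤ ‖Q m‖ := by
          unfold FormalMultilinearSeries.coeff
          have h2 := (Q m).le_opNorm (fun _ => (1:ℂ))
          simpa using h2
        have h1' : ‖Q.coeff m‖ ≤ ‖cauchyPowerSeries σ 0 r' m‖ := by
          rw [hEq]; exact h1
        have h2 := norm_cauchyPowerSeries_le σ 0 r' m
        have hmemc : ∀ θ : ℝ, circleMap 0 r' θ ∈ ball (0:ℂ) 1 := by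
          intro θ
          rw [mem_ball_zero_iff]
          have h3 : ‖circleMap 0 r' θ‖ = |(r':ℝ)| := norm_circleMap_zero r' θ
          rw [h3,
            abs_of_pos hr0]
          exact hr1
        have hle1 : ∀ θ ∈ Set.Icc (0:ℝ) (2*Real.pi), ‖σ (circleMap 0 r' θ)‖ ≤ 1 := fun θ _ =>
          (mem_ball_zero_iff.mp (hσD _ (hmemc θ))).le
        have hcont : ContinuousOn (fun θ : ℝ => ‖σ (circleMap 0 r' θ)‖)
            (Set.uIcc (0:ℝ) (2*Real.pi)) :=
          (hσ_diff.continuousOn.comp (continuous_circleMap 0 r').continuousOn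
            (fun θ _ => hmemc θ)).norm
        have hint : (∫ θ : ℝ in (0:ℝ)..(2*Real.pi), ‖σ (circleMap 0 r' θ)‖) ≤ 2*Real.pi := by
          have h4 := intervalIntegral.integral_mono_on
            (by positivity : (0:ℝ) ≤ 2*Real.pi)
            (hcont.intervalIntegrable)
            (intervalIntegrable_const (μ := MeasureTheory.volume) (c := (1:ℝ)))
            hle1
          simpa using h4
        have hpos : (0:ℝ) ≤ |(r':ℝ)|⁻¹ ^ m := by positivity
        calc ‖Q.coeff m‖ ≤ ‖cauchyPowerSeries σ 0 r' m‖ := h1'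
        _ ≤ ((2 * Real.pi)⁻¹ * ∫ θ : ℝ in (0:ℝ)..(2*Real.pi), ‖σ (circleMap 0 r' θ)‖)
            * |(r':ℝ)|⁻¹ ^ m := h2
        _ ≤ ((2 * Real.pi)⁻¹ * (2 * Real.pi)) * |(r':ℝ)|⁻¹ ^ m := by
            apply mul_le_mul_of_nonneg_right _ hpos
            apply mul_le_mul_of_nonneg_left hint
            positivity
        _ = ((r':ℝ))⁻¹ ^ m := by
            rw [inv_mul_cancel₀ (by positivity : (2*Real.pi) ≠ 0), one_mul,
              abs_of_pos hr0]
      have hQm1 : ‖Q.coeff m‖ ≤ 1 := by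
        have hc : ContinuousAt (fun r : ℝ => r⁻¹ ^ m) 1 :=
          (continuousAt_id.inv₀ one_ne_zero).pow m
        have htend : Tendsto (fun r : ℝ => r⁻¹ ^ m) (𝓝[<] (1:ℝ)) (𝓝 1) := by
          have h5 := hc.tendsto.mono_left (nhdsWithin_le_nhds (s := Set.Iio (1:ℝ)))
          simpa using h5
        refine ge_of_tendsto htend ?_
        filter_upwards [Ioo_mem_nhdsLT_of_mem
          (show (1:ℝ) ∈ Set.Ioc (0:ℝ) 1 from ⟨one_pos, le_refl 1⟩)] with r hr
        exact hcauchy r hr.1 hr.2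
      -- conclusion
      rw [hfinal, ← heq, hpm, hG0, norm_mul]
      have hs1 : ‖s 0‖ ≤ 1 := by rw [← hσm]; exact hQm1
      calc ‖s 0‖ * ‖deriv φ 0‖ ≤ 1 * ‖deriv φ 0‖ :=
        mul_le_mul_of_nonneg_right hs1 (norm_nonneg _)
      _ = ‖deriv φ 0‖ := one_mul _
    · rw [hfinal, hplow n hgt]
      simp
end

section
/- Let 0 ≤ α < 1, β ∈ (−π/2, π/2), and let f ∈ Σ with inverse extension g satisfy Re(e^{iβ} f'(z)) > α·cos β for all z ∈ U and Re(e^{iβ} g'(w)) > α·cos β for all w ∈ U. Then |a₂| ≤ √(2(1−α)cos β / 3) and |a₃| ≤ 2(1−α)cos β / 3, where a₂ = f''(0)/2 and a₃ = f'''(0)/6. -/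
open Metric Real Complex intervalIntegral MeasureTheory

lemma my_integral_conj {a b : ℝ} (f : ℝ → ℂ) :
    (starRingEnd ℂ) (∫ θ in a..b, f θ) = ∫ θ in a..b, (starRingEnd ℂ) (f θ) := by
  rw [intervalIntegral_eq_integral_uIoc, intervalIntegral_eq_integral_uIoc, integral_conj]
  split_ifs <;> simp

lemma my_integral_re {a b : ℝ} (f : ℝ → ℂ) (hf : IntervalIntegrable f volume a b) :
    (∫ θ in a..b, f θ).re = ∫ θ in a..b, (f θ).re := by
  rw [intervalIntegral_eq_integral_uIoc, intervalIntegral_eq_integral_uIoc]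
  have := integral_re (intervalIntegrable_iff.mp hf)
  split_ifs <;> simp [Complex.smul_re] <;>
    simpa [RCLike.re_to_complex] using this.symm

lemma cara_r (p : ℂ → ℂ) (hp : AnalyticOnNhd ℂ p (ball 0 1)) (hp0 : p 0 = 1)
    (hre : ∀ z ∈ ball (0:ℂ) 1, 0 < (p z).re) {r : ℝ} (hr0 : 0 < r) (hr1 : r < 1) :
    ‖iteratedDeriv 2 p 0‖ * r ^ 2 ≤ 4 := by
  set R : NNReal := ⟨r, hr0.le⟩ with hR
  have hRr : (R : ℝ) = r := rfl
  have hsub : closedBall (0:ℂ) r ⊆ ball 0 1 := closedBall_subset_ball hr1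
  have hd : DifferentiableOn ℂ p (closedBall (0:ℂ) (R:ℝ)) := fun z hz =>
    ((hp z (hsub (by rwa [hRr] at hz))).differentiableAt).differentiableWithinAt
  have hps : HasFPowerSeriesOnBall p (cauchyPowerSeries p 0 R) 0 R :=
    hd.hasFPowerSeriesOnBall (by exact_mod_cast hr0)
  set e : ℝ → ℂ := circleMap 0 r with he
  have he_mem : ∀ θ, e θ ∈ ball (0:ℂ) 1 := fun θ =>
    hsub (circleMap_mem_closedBall 0 hr0.le θ)
  have he_ne : ∀ θ, e θ ≠ 0 := fun θ => by
    simp [he, circleMap_eq_center_iff, hr0.ne']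
  have habs : ∀ θ, ‖e θ‖ = r := fun θ => by
    simp [he, norm_circleMap_zero, abs_of_pos hr0]
  have hpc : ContinuousOn p (ball (0:ℂ) 1) := fun z hz =>
    (hp z hz).continuousAt.continuousWithinAt
  have hec : Continuous e := continuous_circleMap 0 r
  have hqc : Continuous fun θ => p (e θ) := hpc.comp_continuous hec he_mem
  have hinv2 : Continuous fun θ => ((e θ)⁻¹) ^ 2 := ((hec.inv₀ he_ne)).pow 2
  -- conversion of circle integrals to interval integrals
  have conv : ∀ f : ℂ → ℂ, (∮ z in C(0, (R:ℝ)), f z)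
      = ∫ θ in (0)..(2*π), (e θ * I) * f (e θ) := by
    intro f
    simp only [circleIntegral, deriv_circleMap, smul_eq_mul]
    simp only [hRr, ← he]
  set A : ℂ := ∫ θ in (0)..(2*π), ((e θ)⁻¹)^2 * p (e θ) with hA
  set C : ℂ := ∫ θ in (0)..(2*π), p (e θ) with hC
  have key : ∀ n : ℕ, (cauchyPowerSeries p 0 (R:ℝ) n fun _ => (1:ℂ)) =
      (2 * (π:ℂ) * I)⁻¹ * (I * ∫ θ in (0)..(2*π), ((e θ)⁻¹)^n * p (e θ)) := by
    intro n
    rw [cauchyPowerSeries_apply, conv, smul_eq_mul]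
    congr 1
    rw [← intervalIntegral.integral_const_mul]
    apply intervalIntegral.integral_congr
    intro θ _
    have h0 : e θ ≠ 0 := he_ne θ
    show e θ * I * ((1/(e θ - 0))^n • (e θ - 0)⁻¹ • p (e θ)) = I * ((e θ)⁻¹^n * p (e θ))
    simp only [smul_eq_mul, sub_zero, one_div]
    field_simp
  have hπ : (π:ℂ) ≠ 0 := by exact_mod_cast Real.pi_ne_zero
  have hC2π : C = 2*π := by
    have h0 := hps.factorial_smul (1:ℂ) 0
    rw [key 0] at h0
    simp only [Nat.factorial_zero, one_smul, iteratedFDeriv_zero_apply, hp0,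
      pow_zero, one_mul, ← hC] at h0
    have hne : (2*(π:ℂ)*I) ≠ 0 := by simp [hπ, I_ne_zero]
    have h1 : (2*(π:ℂ)*I) * 1 = (2*(π:ℂ)*I) * ((2 * (π:ℂ) * I)⁻¹ * (I * C)) := by rw [← h0]
    rw [mul_one, ← mul_assoc, mul_inv_cancel₀ hne, one_mul] at h1
    exact (mul_left_cancel₀ I_ne_zero (show I * (2*(π:ℂ)) = I * C by linear_combination h1)).symm
  have hD : iteratedDeriv 2 p 0 = A / π := by
    have h2 := hps.factorial_smul (1:ℂ) 2
    rw [key 2, ← hA] at h2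
    rw [iteratedDeriv_eq_iteratedFDeriv, ← h2, nsmul_eq_mul]
    have : (Nat.factorial 2 : ℂ) = 2 := by norm_num
    rw [this]
    field_simp [I_ne_zero]
  -- Cauchy-Goursat
  have hB0 : (∫ θ in (0)..(2*π), (e θ)^2 * p (e θ)) = 0 := by
    have hz : (∮ z in C(0, (R:ℝ)), z * p z) = 0 := by
      apply circleIntegral_eq_zero_of_differentiable_on_off_countable
        (by rw [hRr]; exact hr0.le) Set.countable_empty
      · exact continuousOn_id.mul (hpc.mono (by rw [hRr]; exact hsub))
      · intro z hz
        exact differentiableAt_id.mul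
          ((hp z (ball_subset_ball hr1.le (by simpa [hRr] using hz.1))).differentiableAt)
    rw [conv] at hz
    have h5 : (∫ θ in (0)..(2*π), (e θ * I) * (e θ * p (e θ)))
        = I * ∫ θ in (0)..(2*π), (e θ)^2 * p (e θ) := by
      rw [← intervalIntegral.integral_const_mul]
      apply intervalIntegral.integral_congr
      intro θ _; ring
    rw [h5] at hz
    exact (mul_eq_zero.mp hz).resolve_left I_ne_zero
  -- conjugate trick
  have hce : ∀ θ, (starRingEnd ℂ) (e θ) = (r:ℂ)^2 * (e θ)⁻¹ := by
    intro θ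
    have h1 : e θ * (starRingEnd ℂ) (e θ) = ((r:ℝ)^2 : ℂ) := by
      rw [Complex.mul_conj]
      norm_cast
      rw [← Complex.sq_norm, habs θ]
    field_simp [he_ne θ] at h1 ⊢
    linear_combination h1
  have hconj0 : (∫ θ in (0)..(2*π), ((e θ)⁻¹)^2 * (starRingEnd ℂ) (p (e θ))) = 0 := by
    have h := congrArg (starRingEnd ℂ) hB0
    rw [my_integral_conj] at h
    simp only [map_zero] at h
    have h4 : (∫ θ in (0)..(2*π), (starRingEnd ℂ) ((e θ)^2 * p (e θ)))
        = (r:ℂ)^4 * ∫ θ in (0)..(2*π), ((e θ)⁻¹)^2 * (starRingEnd ℂ) (p (e θ)) := by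
      rw [← intervalIntegral.integral_const_mul]
      apply intervalIntegral.integral_congr
      intro θ _
      have h0 : e θ ≠ 0 := he_ne θ
      show (starRingEnd ℂ) (e θ^2 * p (e θ)) = (r:ℂ)^4 * (((e θ)⁻¹)^2 * (starRingEnd ℂ) (p (e θ)))
      rw [map_mul, map_pow, hce θ]
      ring
    rw [h4] at h
    have hr4 : ((r:ℂ))^4 ≠ 0 := by
      simp [pow_ne_zero_iff]
      exact_mod_cast hr0.ne'
    exact (mul_eq_zero.mp h).resolve_left hr4
  -- A as an integral of the real part
  have hint1 : IntervalIntegrable (fun θ => ((e θ)⁻¹)^2 * p (e θ)) volume 0 (2*π) :=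
    (hinv2.mul hqc).intervalIntegrable _ _
  have hint2 : IntervalIntegrable (fun θ => ((e θ)⁻¹)^2 * (starRingEnd ℂ) (p (e θ)))
      volume 0 (2*π) := (hinv2.mul (Complex.continuous_conj.comp hqc)).intervalIntegrable _ _
  have hsum : A = ∫ θ in (0)..(2*π), ((e θ)⁻¹)^2 * (2*(((p (e θ)).re : ℝ) : ℂ)) := by
    have hadd := intervalIntegral.integral_add hint1 hint2
    have : A = A + 0 := by ring
    rw [this, ← hconj0, hA, ← hadd]
    apply intervalIntegral.integral_congr
    intro θ _
    show ((e θ)⁻¹)^2 * p (e θ) + ((e θ)⁻¹)^2 * (starRingEnd ℂ) (p (e θ))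
        = ((e θ)⁻¹)^2 * (2*(((p (e θ)).re : ℝ) : ℂ))
    have hac := Complex.add_conj (p (e θ))
    push_cast at hac ⊢
    linear_combination ((e θ)⁻¹^2) * hac
  -- norm bound
  have hCre : (∫ θ in (0)..(2*π), (p (e θ)).re) = 2*π := by
    have := my_integral_re (a:=0) (b:=2*π) (fun θ => p (e θ)) (hqc.intervalIntegrable _ _)
    rw [← hC, hC2π] at this
    rw [← this]
    simp
  have hnorm : ‖A‖ ≤ (2/r^2) * (2*π) := by
    calc ‖A‖ ≤ ∫ θ in (0)..(2*π), ‖((e θ)⁻¹)^2 * (2*(((p (e θ)).re : ℝ) : ℂ))‖ := by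
          rw [hsum]
          exact intervalIntegral.norm_integral_le_integral_norm (by positivity)
      _ = ∫ θ in (0)..(2*π), (2/r^2) * (p (e θ)).re := by
          apply intervalIntegral.integral_congr
          intro θ _
          have hrepos : 0 < (p (e θ)).re := hre _ (he_mem θ)
          show ‖((e θ)⁻¹)^2 * (2*(((p (e θ)).re : ℝ) : ℂ))‖ = (2/r^2) * (p (e θ)).re
          rw [norm_mul, norm_pow, norm_inv, habs θ,
            norm_mul]
          simp only [Complex.norm_two, Complex.norm_real, Real.norm_eq_abs, _root_.abs_of_pos hrepos]
          field_simp
      _ = (2/r^2) * (2*π) := by rw [intervalIntegral.integral_const_mul, hCre]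
  rw [hD]
  rw [norm_div, Complex.norm_real, Real.norm_eq_abs, _root_.abs_of_pos Real.pi_pos]
  rw [div_mul_eq_mul_div, div_le_iff₀ Real.pi_pos]
  have h6 : 2/r^2 * (2*π) * r^2 = 4*π := by field_simp; ring
  nlinarith [mul_le_mul_of_nonneg_right hnorm (sq_nonneg r)]

lemma cara (p : ℂ → ℂ) (hp : AnalyticOnNhd ℂ p (ball 0 1)) (hp0 : p 0 = 1)
    (hre : ∀ z ∈ ball (0:ℂ) 1, 0 < (p z).re) : ‖iteratedDeriv 2 p 0‖ ≤ 4 := by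
  have ht : Filter.Tendsto (fun r : ℝ => ‖iteratedDeriv 2 p 0‖ * r^2)
      (nhdsWithin 1 (Set.Iio 1)) (nhds (‖iteratedDeriv 2 p 0‖)) := by
    have hc : Continuous fun r : ℝ => ‖iteratedDeriv 2 p 0‖ * r^2 := by continuity
    simpa using (hc.tendsto 1).mono_left nhdsWithin_le_nhds
  refine le_of_tendsto ht ?_
  filter_upwards [Ioo_mem_nhdsLT_of_mem (show (1:ℝ) ∈ Set.Ioc 0 1 by constructor <;> norm_num)]
    with r hr
  exact cara_r p hp hp0 hre hr.1 hr.2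

lemma iter3 (h : ℂ → ℂ) : iteratedDeriv 3 h = deriv (deriv (deriv h)) := by
  rw [show (3:ℕ) = 2+1 from rfl, iteratedDeriv_succ', show (2:ℕ) = 1+1 from rfl,
    iteratedDeriv_succ', iteratedDeriv_one]

lemma iter2 (h : ℂ → ℂ) : iteratedDeriv 2 h = deriv (deriv h) := by
  rw [show (2:ℕ) = 1+1 from rfl, iteratedDeriv_succ', iteratedDeriv_one]

lemma inverse_derivs (f g : ℂ → ℂ)
    (hf_an : AnalyticOnNhd ℂ f (ball 0 1)) (hf1 : deriv f 0 = 1)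
    (hg_an : AnalyticOnNhd ℂ g (ball 0 1)) (hg0 : g 0 = 0)
    (hfg : ∀ᶠ w in nhds (0 : ℂ), f (g w) = w) :
    deriv g 0 = 1 ∧
    iteratedDeriv 2 g 0 = - iteratedDeriv 2 f 0 ∧
    iteratedDeriv 3 g 0 = 3 * (iteratedDeriv 2 f 0)^2 - iteratedDeriv 3 f 0 := by
  have h01 : (0:ℂ) ∈ ball (0:ℂ) 1 := by simp
  -- analyticity of derivatives
  have hf1_an : AnalyticOnNhd ℂ (deriv f) (ball 0 1) := hf_an.deriv
  have hf2_an : AnalyticOnNhd ℂ (deriv (deriv f)) (ball 0 1) := hf1_an.deriv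
  have hg1_an : AnalyticOnNhd ℂ (deriv g) (ball 0 1) := hg_an.deriv
  have hg2_an : AnalyticOnNhd ℂ (deriv (deriv g)) (ball 0 1) := hg1_an.deriv
  -- eventual membership
  have hgb : ∀ᶠ w in nhds (0:ℂ), g w ∈ ball (0:ℂ) 1 := by
    have : Filter.Tendsto g (nhds 0) (nhds 0) := by
      have := (hg_an 0 h01).continuousAt
      rwa [ContinuousAt, hg0] at this
    exact this (ball_mem_nhds _ one_pos)
  have hwb : ∀ᶠ w in nhds (0:ℂ), w ∈ ball (0:ℂ) 1 := ball_mem_nhds _ one_pos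
  -- E1 : f'(g w) * g'(w) = 1 eventually
  have E1 : (fun w => deriv f (g w) * deriv g w) =ᶠ[nhds (0:ℂ)] fun _ => 1 := by
    have hd : deriv (fun w => f (g w)) =ᶠ[nhds (0:ℂ)] deriv (fun w : ℂ => w) :=
      Filter.EventuallyEq.deriv hfg
    have hch : ∀ᶠ w in nhds (0:ℂ), deriv (fun w => f (g w)) w
        = deriv f (g w) * deriv g w := by
      filter_upwards [hgb, hwb] with w hgw hw
      exact deriv_comp w ((hf_an _ hgw).differentiableAt) ((hg_an _ hw).differentiableAt)
    filter_upwards [hd, hch] with w h1 h2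
    rw [← h2, h1, deriv_id'']
  have hg1 : deriv g 0 = 1 := by
    have := E1.self_of_nhds
    simp only [hg0, hf1, one_mul] at this
    exact this
  -- E3 : f''(g w) g'(w)² + f'(g w) g''(w) = 0 eventually
  have E3 : (fun w => deriv (deriv f) (g w) * deriv g w * deriv g w
      + deriv f (g w) * deriv (deriv g) w) =ᶠ[nhds (0:ℂ)] fun _ => 0 := by
    have hd := Filter.EventuallyEq.deriv E1
    have hch : ∀ᶠ w in nhds (0:ℂ), deriv (fun w => deriv f (g w) * deriv g w) w
        = deriv (deriv f) (g w) * deriv g w * deriv g w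
          + deriv f (g w) * deriv (deriv g) w := by
      filter_upwards [hgb, hwb] with w hgw hw
      have dA : DifferentiableAt ℂ (fun w => deriv f (g w)) w :=
        (((hf1_an _ hgw).comp (hg_an _ hw))).differentiableAt
      have dB : DifferentiableAt ℂ (deriv g) w := (hg1_an _ hw).differentiableAt
      have dcomp : deriv (fun w => deriv f (g w)) w = deriv (deriv f) (g w) * deriv g w :=
        deriv_comp w ((hf1_an _ hgw).differentiableAt) ((hg_an _ hw).differentiableAt)
      rw [deriv_fun_mul dA dB, dcomp]
    filter_upwards [hd, hch] with w h1 h2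
    rw [← h2, h1, deriv_const]
  have hg2 : iteratedDeriv 2 g 0 = - iteratedDeriv 2 f 0 := by
    have := E3.self_of_nhds
    simp only [hg0, hg1, hf1, one_mul, mul_one] at this
    rw [iter2, iter2]
    linear_combination this
  refine ⟨hg1, hg2, ?_⟩
  have hg2' : deriv (deriv g) 0 = - deriv (deriv f) 0 := by
    have h := hg2
    rwa [iter2, iter2] at h
  have h01g : g 0 ∈ ball (0:ℂ) 1 := by rw [hg0]; exact h01
  have dA : DifferentiableAt ℂ (fun w => deriv (deriv f) (g w)) 0 :=
    ((hf2_an _ h01g).comp (hg_an _ h01)).differentiableAt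
  have dB : DifferentiableAt ℂ (deriv g) 0 := (hg1_an _ h01).differentiableAt
  have dD : DifferentiableAt ℂ (fun w => deriv f (g w)) 0 :=
    ((hf1_an _ h01g).comp (hg_an _ h01)).differentiableAt
  have dE : DifferentiableAt ℂ (deriv (deriv g)) 0 := (hg2_an _ h01).differentiableAt
  have dAB : DifferentiableAt ℂ (fun w => deriv (deriv f) (g w) * deriv g w) 0 := dA.mul dB
  have dABC : DifferentiableAt ℂ
      (fun w => deriv (deriv f) (g w) * deriv g w * deriv g w) 0 := dAB.mul dB
  have dDE : DifferentiableAt ℂ (fun w => deriv f (g w) * deriv (deriv g) w) 0 := dD.mul dE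
  have hz := (Filter.EventuallyEq.deriv E3).self_of_nhds
  rw [deriv_fun_add dABC dDE, deriv_fun_mul dAB dB, deriv_fun_mul dA dB, deriv_fun_mul dD dE, deriv_const] at hz
  have dc1 : deriv (fun w => deriv (deriv f) (g w)) 0
      = deriv (deriv (deriv f)) (g 0) * deriv g 0 :=
    deriv_comp 0 ((hf2_an _ h01g).differentiableAt) ((hg_an _ h01).differentiableAt)
  have dc2 : deriv (fun w => deriv f (g w)) 0 = deriv (deriv f) (g 0) * deriv g 0 :=
    deriv_comp 0 ((hf1_an _ h01g).differentiableAt) ((hg_an _ h01).differentiableAt)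
  rw [dc1, dc2, hg0, hg1, hf1, hg2'] at hz
  rw [iter3, iter3, iter2]
  linear_combination hz

lemma affine_iter2 (c k Cst : ℂ) (h : ℂ → ℂ) :
    iteratedDeriv 2 (fun z => c * (k * h z - Cst)) 0 = c * (k * deriv (deriv h) 0) := by
  rw [iter2]
  have h1 : deriv (fun z => c * (k * h z - Cst)) = fun z => c * (k * deriv h z) := by
    funext x
    rw [deriv_const_mul_field]
    congr 1
    rw [show (fun z => k * h z - Cst) = fun z => (fun z => k * h z) z - Cst from rfl,
      deriv_sub_const, deriv_const_mul_field]
  rw [h1, deriv_const_mul_field, deriv_const_mul_field]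

/-- Coefficient bounds for the class `NP^{1,1}_Σ(β,α)`. -/
theorem coeff_bounds_NP_one_one
    (α β : ℝ) (hα0 : 0 ≤ α) (hα1 : α < 1)
    (hβ : β ∈ Set.Ioo (-(π / 2)) (π / 2))
    (f g : ℂ → ℂ)
    -- `f` is bi-univalent with inverse extension `g`.
    (hf_an : AnalyticOnNhd ℂ f (ball 0 1)) (hf0 : f 0 = 0) (hf1 : deriv f 0 = 1)
    (hf_inj : Set.InjOn f (ball 0 1))
    (hg_an : AnalyticOnNhd ℂ g (ball 0 1)) (hg_inj : Set.InjOn g (ball 0 1))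
    (hg0 : g 0 = 0) (hfg : ∀ᶠ w in nhds (0 : ℂ), f (g w) = w)
    -- real-part condition for `f`
    (hre_f : ∀ z ∈ ball (0 : ℂ) 1,
      α * Real.cos β < (Complex.exp (Complex.I * β) * deriv f z).re)
    -- real-part condition for `g`
    (hre_g : ∀ w ∈ ball (0 : ℂ) 1,
      α * Real.cos β < (Complex.exp (Complex.I * β) * deriv g w).re) :
    ‖iteratedDeriv 2 f 0 / 2‖ ≤ Real.sqrt (2 * (1 - α) * Real.cos β / 3) ∧
    ‖iteratedDeriv 3 f 0 / 6‖ ≤ 2 * (1 - α) * Real.cos β / 3 := by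
  have hcos : 0 < Real.cos β := Real.cos_pos_of_mem_Ioo hβ
  set k : ℂ := Complex.exp (Complex.I * β) with hkdef
  set c : ℝ := (1 - α) * Real.cos β with hcdef
  have hc : 0 < c := mul_pos (by linarith) hcos
  have hcne : (c:ℂ) ≠ 0 := by exact_mod_cast hc.ne'
  have hk : k = (Real.cos β : ℂ) + (Real.sin β : ℂ) * I := by
    rw [hkdef, mul_comm, Complex.exp_mul_I, ← Complex.ofReal_cos, ← Complex.ofReal_sin]
  have hknorm : ‖k‖ = 1 := by
    rw [hkdef, Complex.norm_exp]; simp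
  -- the main estimate, applied to both f and g
  have main : ∀ h : ℂ → ℂ, AnalyticOnNhd ℂ h (ball 0 1) → deriv h 0 = 1 →
      (∀ z ∈ ball (0:ℂ) 1, α * Real.cos β < (k * deriv h z).re) →
      ‖iteratedDeriv 3 h 0‖ ≤ 4 * c := by
    intro h h_an h1 h_re
    set Cst : ℂ := (↑(α * Real.cos β) + ↑(Real.sin β) * I) with hCst
    set P : ℂ → ℂ := fun z => ((c:ℂ))⁻¹ * (k * deriv h z - Cst) with hPdef
    have hP_an : AnalyticOnNhd ℂ P (ball 0 1) :=
      analyticOnNhd_const.mul ((analyticOnNhd_const.mul h_an.deriv).sub analyticOnNhd_const)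
    have hnum : ∀ z, (k * deriv h z - Cst).re = (k * deriv h z).re - α * Real.cos β := by
      intro z
      simp [hCst, Complex.sub_re, Complex.add_re, Complex.cos_ofReal_re]
    have hP0 : P 0 = 1 := by
      have hnum0 : k * deriv h 0 - Cst = (c:ℂ) := by
        rw [h1, mul_one, hk, hCst, hcdef]
        push_cast
        ring
      rw [hPdef]
      simp only [hnum0]
      exact inv_mul_cancel₀ hcne
    have hPre : ∀ z ∈ ball (0:ℂ) 1, 0 < (P z).re := by
      intro z hz
      have h2 := h_re z hz
      have : (P z).re = c⁻¹ * ((k * deriv h z).re - α * Real.cos β) := by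
        rw [hPdef]
        simp only [← Complex.ofReal_inv]
        rw [show ((↑(c⁻¹):ℂ) * (k * deriv h z - Cst)).re
            = c⁻¹ * (k * deriv h z - Cst).re by
          simp [Complex.mul_re]]
        rw [hnum]
      rw [this]
      have : 0 < (k * deriv h z).re - α * Real.cos β := by linarith
      positivity
    have hcara := cara P hP_an hP0 hPre
    have hP2 : iteratedDeriv 2 P 0 = ((c:ℂ))⁻¹ * (k * iteratedDeriv 3 h 0) := by
      rw [hPdef, affine_iter2, iter3]
    rw [hP2] at hcara
    rw [norm_mul, norm_mul, hknorm, one_mul, norm_inv, Complex.norm_real,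
      Real.norm_eq_abs, _root_.abs_of_pos hc] at hcara
    rw [inv_mul_le_iff₀ hc] at hcara
    linarith
  obtain ⟨hg1, hg2rel, hg3rel⟩ := inverse_derivs f g hf_an hf1 hg_an hg0 hfg
  have hf3 : ‖iteratedDeriv 3 f 0‖ ≤ 4 * c := main f hf_an hf1 hre_f
  have hg3 : ‖iteratedDeriv 3 g 0‖ ≤ 4 * c := main g hg_an hg1 hre_g
  have hsq : 3 * ‖iteratedDeriv 2 f 0‖^2 ≤ 8 * c := by
    have hid : 3 * (iteratedDeriv 2 f 0)^2 = iteratedDeriv 3 g 0 + iteratedDeriv 3 f 0 := by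
      linear_combination -hg3rel
    have : ‖(3:ℂ) * (iteratedDeriv 2 f 0)^2‖ ≤ 8 * c := by
      rw [hid]
      calc ‖iteratedDeriv 3 g 0 + iteratedDeriv 3 f 0‖
          ≤ ‖iteratedDeriv 3 g 0‖ + ‖iteratedDeriv 3 f 0‖ := norm_add_le _ _
        _ ≤ 8 * c := by linarith
    rwa [norm_mul, norm_pow, show ‖(3:ℂ)‖ = 3 by simp] at this
  constructor
  · rw [show 2 * (1 - α) * Real.cos β / 3 = 2 * c / 3 by rw [hcdef]; ring]
    rw [Real.le_sqrt (norm_nonneg _) (by positivity)]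
    rw [norm_div, show ‖(2:ℂ)‖ = 2 by simp, div_pow]
    rw [div_le_iff₀ (by norm_num : (0:ℝ) < 2^2)]
    nlinarith [hsq]
  · rw [norm_div, show ‖(6:ℂ)‖ = 6 by simp, div_le_iff₀ (by norm_num : (0:ℝ) < 6)]
    rw [show 2 * (1 - α) * Real.cos β / 3 * 6 = 4 * ((1-α) * Real.cos β) by ring]
    rw [← hcdef] at *
    exact hf3
end

section
/- Let β ∈ (−π/2, π/2), λ ≥ 1, μ ≥ 0, let f ∈ Σ with inverse extension g, and let p, q be analytic on U with p(0) = q(0) = 1 such that e^{iβ}((1−λ)(f(z)/z)^μ + λ f'(z)(f(z)/z)^{μ−1}) = p(z)·cos β + i·sin β for all z ∈ U \ {0} and e^{iβ}((1−λ)(g(w)/w)^μ + λ g'(w)(g(w)/w)^{μ−1}) = q(w)·cos β + i·sin β for all w ∈ U \ {0}. Then, writing a₂ = f''(0)/2, p₂ = p''(0)/2, q₂ = q''(0)/2, one has a₂² = e^{−iβ}(p₂ + q₂)·cos β / ((1+μ)(2λ+μ)). -/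
open Metric Real Complex Filter



private lemma analyticAt_deriv' {f : ℂ → ℂ} {x : ℂ} (h : AnalyticAt ℂ f x) :
    AnalyticAt ℂ (deriv f) x := by
  obtain ⟨s, hs, hsa⟩ := h.exists_mem_nhds_analyticOnNhd
  exact hsa.deriv x (mem_of_mem_nhds hs)

private lemma iter2_affine {q : ℂ → ℂ} (hq : AnalyticAt ℂ q 0) (a b c : ℂ) :
    iteratedDeriv 2 (fun z => a * (q z * b + c)) 0 = a * b * iteratedDeriv 2 q 0 := by
  have h1 : deriv (fun z => a * (q z * b + c)) =ᶠ[nhds 0] fun z => a * b * deriv q z := by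
    filter_upwards [hq.eventually_analyticAt] with z hz
    have hd : HasDerivAt (fun z => a * (q z * b + c)) (a * (deriv q z * b)) z :=
      ((hz.differentiableAt.hasDerivAt.mul_const b).add_const c).const_mul a
    rw [hd.deriv]; ring
  rw [iteratedDeriv_succ, iteratedDeriv_succ, iteratedDeriv_zero, h1.deriv_eq]
  have hd : HasDerivAt (fun z => a * b * deriv q z) (a * b * deriv (deriv q) 0) 0 :=
    (analyticAt_deriv' hq).differentiableAt.hasDerivAt.const_mul (a * b)
  rw [hd.deriv]
  simp [iteratedDeriv_succ, iteratedDeriv_zero]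

private lemma inv_aux (f g : ℂ → ℂ) (hf : AnalyticAt ℂ f 0) (hg : AnalyticAt ℂ g 0)
    (hg0 : g 0 = 0) (hf1 : deriv f 0 = 1) (hfg : ∀ᶠ w in nhds (0:ℂ), f (g w) = w) :
    deriv g 0 = 1 ∧ iteratedDeriv 2 g 0 = - iteratedDeriv 2 f 0 ∧
      iteratedDeriv 3 g 0 = 3 * (iteratedDeriv 2 f 0)^2 - iteratedDeriv 3 f 0 := by
  have hdf := analyticAt_deriv' hf
  have hd2f := analyticAt_deriv' hdf
  have hd3f := analyticAt_deriv' hd2f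
  have hdg := analyticAt_deriv' hg
  have hd2g := analyticAt_deriv' hdg
  have hd3g := analyticAt_deriv' hd2g
  have hgc : Filter.Tendsto g (nhds 0) (nhds 0) := by
    have := hg.continuousAt; rwa [ContinuousAt, hg0] at this
  have hEf : ∀ᶠ w in nhds (0:ℂ), AnalyticAt ℂ f (g w) := hgc.eventually hf.eventually_analyticAt
  have hEdf : ∀ᶠ w in nhds (0:ℂ), AnalyticAt ℂ (deriv f) (g w) :=
    hgc.eventually hdf.eventually_analyticAt
  have hEd2f : ∀ᶠ w in nhds (0:ℂ), AnalyticAt ℂ (deriv (deriv f)) (g w) :=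
    hgc.eventually hd2f.eventually_analyticAt
  have hEg := hg.eventually_analyticAt
  have hEdg := hdg.eventually_analyticAt
  have hfg' : (fun w => f (g w)) =ᶠ[nhds (0:ℂ)] (fun w => w) := hfg
  have hE1 : ∀ᶠ w in nhds (0:ℂ), deriv f (g w) * deriv g w = 1 := by
    filter_upwards [hfg'.deriv, hEf, hEg] with w hw hfw hgw
    have hc : HasDerivAt (fun w => f (g w)) (deriv f (g w) * deriv g w) w :=
      hfw.differentiableAt.hasDerivAt.comp w hgw.differentiableAt.hasDerivAt
    rw [← hc.deriv, hw, deriv_id'']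
  have hdg0 : deriv g 0 = 1 := by
    have h := hE1.self_of_nhds
    rw [hg0, hf1, one_mul] at h; exact h
  have hE2 : ∀ᶠ w in nhds (0:ℂ),
      deriv (deriv f) (g w) * deriv g w * deriv g w + deriv f (g w) * deriv (deriv g) w = 0 := by
    have h' : (fun w => deriv f (g w) * deriv g w) =ᶠ[nhds (0:ℂ)] (fun _ => 1) := hE1
    filter_upwards [h'.deriv, hEdf, hEd2f, hEg, hEdg] with w hw hdfw hd2fw hgw hdgw
    have hc1 : HasDerivAt (fun w => deriv f (g w)) (deriv (deriv f) (g w) * deriv g w) w :=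
      hdfw.differentiableAt.hasDerivAt.comp w hgw.differentiableAt.hasDerivAt
    have hc : HasDerivAt (fun w => deriv f (g w) * deriv g w)
        (deriv (deriv f) (g w) * deriv g w * deriv g w + deriv f (g w) * deriv (deriv g) w) w :=
      hc1.mul hdgw.differentiableAt.hasDerivAt
    rw [← hc.deriv, hw, deriv_const]
  have hd2g0 : deriv (deriv g) 0 = - deriv (deriv f) 0 := by
    have h := hE2.self_of_nhds
    rw [hg0, hf1, hdg0] at h
    linear_combination h
  have hE2' : (fun w => deriv (deriv f) (g w) * deriv g w * deriv g w
      + deriv f (g w) * deriv (deriv g) w) =ᶠ[nhds (0:ℂ)] (fun _ => (0:ℂ)) := hE2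
  have hd3g0 : deriv (deriv (deriv g)) 0 = 3 * (deriv (deriv f) 0)^2 - deriv (deriv (deriv f)) 0 := by
    have hzero : deriv (fun w => deriv (deriv f) (g w) * deriv g w * deriv g w
        + deriv f (g w) * deriv (deriv g) w) 0 = 0 := by
      rw [hE2'.deriv_eq, deriv_const]
    have hgd : HasDerivAt g (deriv g 0) 0 := hg.differentiableAt.hasDerivAt
    have hA : HasDerivAt (fun w => deriv (deriv f) (g w))
        (deriv (deriv (deriv f)) (g 0) * deriv g 0) 0 := by
      have : AnalyticAt ℂ (deriv (deriv f)) (g 0) := by rwa [hg0]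
      exact this.differentiableAt.hasDerivAt.comp 0 hgd
    have hD : HasDerivAt (fun w => deriv f (g w)) (deriv (deriv f) (g 0) * deriv g 0) 0 := by
      have : AnalyticAt ℂ (deriv f) (g 0) := by rwa [hg0]
      exact this.differentiableAt.hasDerivAt.comp 0 hgd
    have hC : HasDerivAt (deriv g) (deriv (deriv g) 0) 0 := hdg.differentiableAt.hasDerivAt
    have hE : HasDerivAt (deriv (deriv g)) (deriv (deriv (deriv g)) 0) 0 :=
      hd2g.differentiableAt.hasDerivAt
    have hc : HasDerivAt (fun w => deriv (deriv f) (g w) * deriv g w * deriv g w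
        + deriv f (g w) * deriv (deriv g) w)
        (((deriv (deriv (deriv f)) (g 0) * deriv g 0) * deriv g 0
            + deriv (deriv f) (g 0) * deriv (deriv g) 0) * deriv g 0
          + (deriv (deriv f) (g 0) * deriv g 0) * deriv (deriv g) 0
          + ((deriv (deriv f) (g 0) * deriv g 0) * deriv (deriv g) 0
            + deriv f (g 0) * deriv (deriv (deriv g)) 0)) 0 := by
      exact ((hA.mul hC).mul hC).add (hD.mul hE)
    rw [hc.deriv] at hzero
    rw [hg0, hf1, hdg0, hd2g0] at hzero
    linear_combination hzero
  refine ⟨hdg0, ?_, ?_⟩ <;> simp only [iteratedDeriv_succ, iteratedDeriv_zero]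
  · rw [hd2g0]
  · rw [hd3g0]

private lemma main_aux (lam μ : ℂ) (F P : ℂ → ℂ)
    (hF : AnalyticAt ℂ F 0) (hF0 : F 0 = 0) (hF1 : deriv F 0 = 1)
    (hP : AnalyticAt ℂ P 0)
    (heq : ∀ᶠ z in nhdsWithin (0:ℂ) {(0:ℂ)}ᶜ,
      (1 - lam) * (F z / z) ^ μ + lam * deriv F z * (F z / z) ^ (μ - 1) = P z) :
    iteratedDeriv 2 P 0 =
      ((1-lam)*μ*(μ-1) + lam*(μ-1)*(μ+2)) * (iteratedDeriv 2 F 0 / 2)^2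
      + ((1-lam)*μ + lam*(μ+2)) * (iteratedDeriv 3 F 0 / 3) := by
  obtain ⟨H, hH, hH0, hFH⟩ :
      ∃ H : ℂ → ℂ, AnalyticAt ℂ H 0 ∧ H 0 = 1 ∧ ∀ z, F z = z * H z := by
    refine ⟨dslope F 0, ?_, ?_, ?_⟩
    · obtain ⟨pser, hpser⟩ := hF
      exact ⟨_, hpser.has_fpower_series_dslope_fslope⟩
    · rw [dslope_same, hF1]
    · intro z
      have h := sub_smul_dslope F 0 z
      simp only [sub_zero, smul_eq_mul, hF0] at h
      exact h.symm
  have hdH : AnalyticAt ℂ (deriv H) 0 := analyticAt_deriv' hH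
  have hd2H : AnalyticAt ℂ (deriv (deriv H)) 0 := analyticAt_deriv' hdH
  have hdF : AnalyticAt ℂ (deriv F) 0 := analyticAt_deriv' hF
  have hd2F : AnalyticAt ℂ (deriv (deriv F)) 0 := analyticAt_deriv' hdF
  have hd3F : AnalyticAt ℂ (deriv (deriv (deriv F))) 0 := analyticAt_deriv' hd2F
  have hs0 : H 0 ∈ slitPlane := by rw [hH0]; exact one_mem_slitPlane
  have hslit : ∀ᶠ z in nhds (0:ℂ), H z ∈ slitPlane :=
    hH.continuousAt.eventually_mem (isOpen_slitPlane.mem_nhds hs0)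
  have hEH := hH.eventually_analyticAt
  have hEdH := hdH.eventually_analyticAt
  have hEdF := hdF.eventually_analyticAt
  have hEd2F := hd2F.eventually_analyticAt
  -- the extended left-hand side
  set E : ℂ → ℂ := fun z => (1 - lam) * H z ^ μ + lam * deriv F z * H z ^ (μ - 1) with hEdef
  have hu : AnalyticAt ℂ (fun z => H z ^ μ) 0 := hH.cpow analyticAt_const hs0
  have hv : AnalyticAt ℂ (fun z => H z ^ (μ - 1)) 0 := hH.cpow analyticAt_const hs0
  have hEan : AnalyticAt ℂ E 0 :=
    (analyticAt_const.mul hu).add ((analyticAt_const.mul hdF).mul hv)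
  have hpunct : ∀ᶠ z in nhdsWithin (0:ℂ) {(0:ℂ)}ᶜ, E z = P z := by
    filter_upwards [heq, eventually_mem_nhdsWithin] with z hz hz0
    have hz0' : z ≠ 0 := hz0
    have hFz : F z / z = H z := by rw [hFH z, mul_comm, mul_div_assoc, div_self hz0', mul_one]
    rw [← hz, hEdef]; simp only [hFz]
  have hE0 : E 0 = P 0 := by
    have ht1 : Filter.Tendsto E (nhdsWithin (0:ℂ) {(0:ℂ)}ᶜ) (nhds (E 0)) :=
      hEan.continuousAt.continuousWithinAt.tendsto
    have ht2 : Filter.Tendsto E (nhdsWithin (0:ℂ) {(0:ℂ)}ᶜ) (nhds (P 0)) :=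
      Filter.Tendsto.congr' (Filter.EventuallyEq.symm hpunct) hP.continuousAt.continuousWithinAt.tendsto
    exact tendsto_nhds_unique ht1 ht2
  have hEP : E =ᶠ[nhds (0:ℂ)] P := by
    have h := eventually_nhdsWithin_iff.mp hpunct
    filter_upwards [h] with z hz
    by_cases h0 : z = 0
    · subst h0; exact hE0
    · exact hz h0
  -- first derivative of E, eventually
  set E1 : ℂ → ℂ := fun z =>
    (1 - lam) * (μ * H z ^ (μ - 1) * deriv H z)
    + lam * (deriv (deriv F) z * H z ^ (μ - 1)
        + deriv F z * ((μ - 1) * H z ^ (μ - 2) * deriv H z)) with hE1def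
  have hDE : deriv E =ᶠ[nhds (0:ℂ)] E1 := by
    filter_upwards [hEH, hEdF, hEd2F, hslit] with z hHz hdFz hd2Fz hsz
    have hH' : HasDerivAt H (deriv H z) z := hHz.differentiableAt.hasDerivAt
    have hu' : HasDerivAt (fun z => H z ^ μ) (μ * H z ^ (μ - 1) * deriv H z) z :=
      hH'.cpow_const hsz
    have hv' : HasDerivAt (fun z => H z ^ (μ - 1)) ((μ - 1) * H z ^ (μ - 1 - 1) * deriv H z) z :=
      hH'.cpow_const hsz
    have hdF' : HasDerivAt (fun z => lam * deriv F z) (lam * deriv (deriv F) z) z :=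
      hdFz.differentiableAt.hasDerivAt.const_mul lam
    have hE' : HasDerivAt E
        ((1 - lam) * (μ * H z ^ (μ - 1) * deriv H z)
          + ((lam * deriv (deriv F) z) * H z ^ (μ - 1)
            + (lam * deriv F z) * ((μ - 1) * H z ^ (μ - 1 - 1) * deriv H z))) z := by
      have := (hu'.const_mul (1 - lam)).add (hdF'.mul hv')
      exact this
    rw [hE'.deriv, hE1def]
    have hexps : μ - 1 - 1 = μ - 2 := by ring
    rw [hexps]; ring
  -- relations between derivatives of F and H
  have hdFeq : deriv F =ᶠ[nhds (0:ℂ)] fun z => H z + z * deriv H z := by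
    filter_upwards [hEH] with z hHz
    have hFe : F = fun y => y * H y := funext hFH
    rw [hFe]
    have hd : HasDerivAt (fun y => y * H y) (1 * H z + z * deriv H z) z :=
      (hasDerivAt_id z).mul hHz.differentiableAt.hasDerivAt
    rw [hd.deriv]; ring
  have hd2Feq : deriv (deriv F) =ᶠ[nhds (0:ℂ)] fun z => 2 * deriv H z + z * deriv (deriv H) z := by
    refine hdFeq.deriv.trans ?_
    filter_upwards [hEH, hEdH] with z hHz hdHz
    have hd : HasDerivAt (fun w => H w + w * deriv H w)
        (deriv H z + (1 * deriv H z + z * deriv (deriv H) z)) z :=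
      hHz.differentiableAt.hasDerivAt.add ((hasDerivAt_id z).mul hdHz.differentiableAt.hasDerivAt)
    rw [hd.deriv]; ring
  have hd2F0 : deriv (deriv F) 0 = 2 * deriv H 0 := by
    have h := hd2Feq.self_of_nhds; rw [h]; ring
  have hd3F0 : deriv (deriv (deriv F)) 0 = 3 * deriv (deriv H) 0 := by
    rw [hd2Feq.deriv_eq]
    have hd : HasDerivAt (fun z => 2 * deriv H z + z * deriv (deriv H) z)
        (2 * deriv (deriv H) 0 + (1 * deriv (deriv H) 0 + 0 * deriv (deriv (deriv H)) 0)) 0 :=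
      (hdH.differentiableAt.hasDerivAt.const_mul 2).add
        ((hasDerivAt_id 0).mul hd2H.differentiableAt.hasDerivAt)
    rw [hd.deriv]; ring
  -- compute deriv E1 0
  have hH'0 : HasDerivAt H (deriv H 0) 0 := hH.differentiableAt.hasDerivAt
  have hw1 : HasDerivAt (fun z => H z ^ (μ - 1)) ((μ - 1) * H 0 ^ (μ - 1 - 1) * deriv H 0) 0 :=
    hH'0.cpow_const hs0
  have hw2 : HasDerivAt (fun z => H z ^ (μ - 2)) ((μ - 2) * H 0 ^ (μ - 2 - 1) * deriv H 0) 0 :=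
    hH'0.cpow_const hs0
  have hdH'0 : HasDerivAt (deriv H) (deriv (deriv H) 0) 0 := hdH.differentiableAt.hasDerivAt
  have hdF'0 : HasDerivAt (deriv F) (deriv (deriv F) 0) 0 := hdF.differentiableAt.hasDerivAt
  have hd2F'0 : HasDerivAt (deriv (deriv F)) (deriv (deriv (deriv F)) 0) 0 :=
    hd2F.differentiableAt.hasDerivAt
  have hInner1 : HasDerivAt (fun z => μ * H z ^ (μ - 1) * deriv H z)
      ((μ * ((μ - 1) * H 0 ^ (μ - 1 - 1) * deriv H 0)) * deriv H 0
        + (μ * H 0 ^ (μ - 1)) * deriv (deriv H) 0) 0 :=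
    (hw1.const_mul μ).mul hdH'0
  have hInner2 : HasDerivAt (fun z => deriv (deriv F) z * H z ^ (μ - 1)
      + deriv F z * ((μ - 1) * H z ^ (μ - 2) * deriv H z))
      ((deriv (deriv (deriv F)) 0 * H 0 ^ (μ - 1)
          + deriv (deriv F) 0 * ((μ - 1) * H 0 ^ (μ - 1 - 1) * deriv H 0))
        + (deriv (deriv F) 0 * ((μ - 1) * H 0 ^ (μ - 2) * deriv H 0)
          + deriv F 0 * ((((μ - 1) * ((μ - 2) * H 0 ^ (μ - 2 - 1) * deriv H 0)) * deriv H 0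
            + ((μ - 1) * H 0 ^ (μ - 2)) * deriv (deriv H) 0)))) 0 :=
    (hd2F'0.mul hw1).add (hdF'0.mul ((hw2.const_mul (μ - 1)).mul hdH'0))
  have hE1' : HasDerivAt E1 _ 0 := (hInner1.const_mul (1 - lam)).add (hInner2.const_mul lam)
  -- conclude
  rw [iteratedDeriv_succ, iteratedDeriv_succ, iteratedDeriv_zero,
    (hEP.deriv.symm).deriv_eq, hDE.deriv_eq, hE1'.deriv]
  rw [iteratedDeriv_succ, iteratedDeriv_succ, iteratedDeriv_zero,
    iteratedDeriv_succ, iteratedDeriv_succ, iteratedDeriv_succ, iteratedDeriv_zero,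
    hd2F0, hd3F0, hH0, hF1]
  simp only [Complex.one_cpow]
  ring

/-- For `f` in the class `NP^{μ,λ}_Σ(β,h)` with associated functions `p` and `q`,
one has `a₂² = e^{−iβ}(p₂+q₂)cos β / ((1+μ)(2λ+μ))`. -/
theorem coeff_relation_a2_sq
    (β lam μ : ℝ) (hβ : β ∈ Set.Ioo (-(π / 2)) (π / 2)) (hlam : 1 ≤ lam) (hμ : 0 ≤ μ)
    (f g p q : ℂ → ℂ)
    -- `f` is bi-univalent with inverse extension `g`.
    (hf_an : AnalyticOnNhd ℂ f (ball 0 1)) (hf0 : f 0 = 0) (hf1 : deriv f 0 = 1)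
    (hf_inj : Set.InjOn f (ball 0 1))
    (hg_an : AnalyticOnNhd ℂ g (ball 0 1)) (hg_inj : Set.InjOn g (ball 0 1))
    (hg0 : g 0 = 0) (hfg : ∀ᶠ w in nhds (0 : ℂ), f (g w) = w)
    (hp_an : AnalyticOnNhd ℂ p (ball 0 1)) (hp0 : p 0 = 1)
    (hq_an : AnalyticOnNhd ℂ q (ball 0 1)) (hq0 : q 0 = 1)
    (heq_p : ∀ z ∈ ball (0 : ℂ) 1, z ≠ 0 →
      Complex.exp (Complex.I * β) *
        ((1 - (lam : ℂ)) * (f z / z) ^ (μ : ℂ) +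
          (lam : ℂ) * deriv f z * (f z / z) ^ ((μ : ℂ) - 1))
      = p z * (Real.cos β : ℂ) + Complex.I * (Real.sin β : ℂ))
    (heq_q : ∀ w ∈ ball (0 : ℂ) 1, w ≠ 0 →
      Complex.exp (Complex.I * β) *
        ((1 - (lam : ℂ)) * (g w / w) ^ (μ : ℂ) +
          (lam : ℂ) * deriv g w * (g w / w) ^ ((μ : ℂ) - 1))
      = q w * (Real.cos β : ℂ) + Complex.I * (Real.sin β : ℂ)) :
    (iteratedDeriv 2 f 0 / 2) ^ 2 =
      Complex.exp (-(Complex.I * β)) * (iteratedDeriv 2 p 0 / 2 + iteratedDeriv 2 q 0 / 2) *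
        (Real.cos β : ℂ) / ((1 + (μ : ℂ)) * (2 * (lam : ℂ) + (μ : ℂ))) := by
  have h0mem : (0:ℂ) ∈ ball (0:ℂ) 1 := mem_ball_self one_pos
  have hfa := hf_an 0 h0mem
  have hga := hg_an 0 h0mem
  have hpa := hp_an 0 h0mem
  have hqa := hq_an 0 h0mem
  set e : ℂ := Complex.exp (-(Complex.I * β)) with hedef
  have hexp : ∀ X Y : ℂ, Complex.exp (Complex.I * β) * X = Y → X = e * Y := by
    intro X Y h
    rw [← h, hedef, ← mul_assoc, ← Complex.exp_add, neg_add_cancel, Complex.exp_zero, one_mul]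
  have hball : ∀ᶠ z in nhds (0:ℂ), z ∈ ball (0:ℂ) 1 := Metric.isOpen_ball.eventually_mem h0mem
  -- eventual equations on the punctured neighborhood
  have heqp' : ∀ᶠ z in nhdsWithin (0:ℂ) {(0:ℂ)}ᶜ,
      (1 - (lam:ℂ)) * (f z / z) ^ (μ:ℂ) + (lam:ℂ) * deriv f z * (f z / z) ^ ((μ:ℂ)-1)
        = e * (p z * (Real.cos β : ℂ) + Complex.I * (Real.sin β : ℂ)) := by
    filter_upwards [hball.filter_mono nhdsWithin_le_nhds, eventually_mem_nhdsWithin] with z hz hz0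
    exact hexp _ _ (heq_p z hz hz0)
  have heqq' : ∀ᶠ w in nhdsWithin (0:ℂ) {(0:ℂ)}ᶜ,
      (1 - (lam:ℂ)) * (g w / w) ^ (μ:ℂ) + (lam:ℂ) * deriv g w * (g w / w) ^ ((μ:ℂ)-1)
        = e * (q w * (Real.cos β : ℂ) + Complex.I * (Real.sin β : ℂ)) := by
    filter_upwards [hball.filter_mono nhdsWithin_le_nhds, eventually_mem_nhdsWithin] with w hw hw0
    exact hexp _ _ (heq_q w hw hw0)
  obtain ⟨hdg0, hI2g, hI3g⟩ := inv_aux f g hfa hga hg0 hf1 hfg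
  have hPfa : AnalyticAt ℂ (fun z => e * (p z * (Real.cos β : ℂ) + Complex.I * (Real.sin β : ℂ))) 0 :=
    analyticAt_const.mul ((hpa.mul analyticAt_const).add analyticAt_const)
  have hPga : AnalyticAt ℂ (fun w => e * (q w * (Real.cos β : ℂ) + Complex.I * (Real.sin β : ℂ))) 0 :=
    analyticAt_const.mul ((hqa.mul analyticAt_const).add analyticAt_const)
  have Hf := main_aux (lam:ℂ) (μ:ℂ) f _ hfa hf0 hf1 hPfa heqp'
  have Hg := main_aux (lam:ℂ) (μ:ℂ) g _ hga hg0 hdg0 hPga heqq'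
  rw [iter2_affine hpa e (Real.cos β : ℂ) (Complex.I * (Real.sin β : ℂ))] at Hf
  rw [iter2_affine hqa e (Real.cos β : ℂ) (Complex.I * (Real.sin β : ℂ))] at Hg
  rw [hI2g, hI3g] at Hg
  have hden : ((1:ℂ) + (μ:ℂ)) * (2 * (lam:ℂ) + (μ:ℂ)) ≠ 0 := by
    have h1 : ((1:ℂ) + (μ:ℂ)) ≠ 0 := by
      have : (0:ℝ) < 1 + μ := by linarith
      exact_mod_cast Complex.ofReal_ne_zero.mpr (ne_of_gt this)
    have h2 : (2 * (lam:ℂ) + (μ:ℂ)) ≠ 0 := by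
      have : (0:ℝ) < 2 * lam + μ := by linarith
      exact_mod_cast Complex.ofReal_ne_zero.mpr (ne_of_gt this)
    exact mul_ne_zero h1 h2
  rw [eq_div_iff hden]
  linear_combination -(Hf + Hg) / 2
end

section
/- Let β ∈ (−π/2, π/2), λ ≥ 1, μ ≥ 0, let f ∈ Σ with inverse extension g, and let p, q be analytic on U with p(0) = q(0) = 1 such that e^{iβ}((1−λ)(f(z)/z)^μ + λ f'(z)(f(z)/z)^{μ−1}) = p(z)·cos β + i·sin β for all z ∈ U \ {0} and e^{iβ}((1−λ)(g(w)/w)^μ + λ g'(w)(g(w)/w)^{μ−1}) = q(w)·cos β + i·sin β for all w ∈ U \ {0}. Then, writing a₃ = f'''(0)/6, p₂ = p''(0)/2, q₂ = q''(0)/2, one has a₃ = e^{−iβ}(p₂ + q₂)·cos β / ((1+μ)(2λ+μ)) + e^{−iβ}(p₂ − q₂)·cos β / (2(2λ+μ)). -/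
open Metric Real Complex Filter Topology


private lemma aderiv {u : ℂ → ℂ} {x : ℂ} (h : AnalyticAt ℂ u x) :
    AnalyticAt ℂ (deriv u) x :=
  (AnalyticOnNhd.deriv (s := {y | AnalyticAt ℂ u y}) (fun _ hy => hy)) x h

private lemma hda {u : ℂ → ℂ} {x : ℂ} (h : AnalyticAt ℂ u x) :
    HasDerivAt u (deriv u x) x := h.differentiableAt.hasDerivAt

private lemma side (β lam μ : ℝ) (F P : ℂ → ℂ)
    (hF : AnalyticAt ℂ F 0) (hF0 : F 0 = 0) (hF1 : deriv F 0 = 1)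
    (hP0 : P 0 = Complex.exp (Complex.I * β))
    (heq : ∀ᶠ z in 𝓝 (0:ℂ), z ≠ 0 →
      Complex.exp (Complex.I * β) *
        ((1 - (lam : ℂ)) * (F z / z) ^ (μ : ℂ) +
          (lam : ℂ) * deriv F z * (F z / z) ^ ((μ : ℂ) - 1)) = P z) :
    deriv (deriv P) 0 = Complex.exp (Complex.I * β) *
      ((2 * (lam:ℂ) + (μ:ℂ)) * deriv (deriv (deriv F)) 0 / 3
        + ((μ:ℂ) - 1) * (2 * (lam:ℂ) + (μ:ℂ)) * (deriv (deriv F) 0 / 2) ^ 2) := by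
  obtain ⟨ps, hps⟩ := id hF
  set X := Complex.exp (Complex.I * β) with hXdef
  set c : ℂ := (μ : ℂ) with hcdef
  set h : ℂ → ℂ := dslope F 0 with hdef
  have hh : AnalyticAt ℂ h 0 := (hps.has_fpower_series_dslope_fslope).analyticAt
  have hh0 : h 0 = 1 := by rw [hdef, dslope_same, hF1]
  have hzh : ∀ z, F z = z * h z := by
    intro z
    rcases eq_or_ne z 0 with rfl | hz
    · simp [hF0]
    · rw [hdef, dslope_of_ne _ hz, slope_def_field, hF0, sub_zero, sub_zero]
      field_simp
  have hfe : F = fun w => w * h w := funext hzh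
  have hhd : AnalyticAt ℂ (deriv h) 0 := aderiv hh
  have hhd2 : AnalyticAt ℂ (deriv (deriv h)) 0 := aderiv hhd
  have evA : ∀ᶠ z in 𝓝 (0:ℂ), AnalyticAt ℂ h z := hh.eventually_analyticAt
  have evF : ∀ᶠ z in 𝓝 (0:ℂ), AnalyticAt ℂ F z := hF.eventually_analyticAt
  have evslit : ∀ᶠ z in 𝓝 (0:ℂ), h z ∈ Complex.slitPlane := by
    apply hh.continuousAt.eventually_mem
    rw [hh0]
    exact isOpen_slitPlane.mem_nhds Complex.one_mem_slitPlane
  -- F' = h + z h'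
  have hF'ev : ∀ᶠ z in 𝓝 (0:ℂ), deriv F z = h z + z * deriv h z := by
    filter_upwards [evA] with z hz
    rw [hfe, deriv_fun_mul differentiableAt_fun_id hz.differentiableAt, deriv_id'']
    ring
  have hF''ev : ∀ᶠ z in 𝓝 (0:ℂ), deriv (deriv F) z
      = 2 * deriv h z + z * deriv (deriv h) z := by
    have h1 : deriv (deriv F) =ᶠ[𝓝 (0:ℂ)] deriv (fun z => h z + z * deriv h z) :=
      Filter.EventuallyEq.deriv hF'ev
    have h2 : ∀ᶠ z in 𝓝 (0:ℂ), deriv (fun z => h z + z * deriv h z) z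
        = 2 * deriv h z + z * deriv (deriv h) z := by
      filter_upwards [evA] with z hz
      have hdz : AnalyticAt ℂ (deriv h) z := aderiv hz
      rw [deriv_fun_add hz.differentiableAt (differentiableAt_fun_id.fun_mul hdz.differentiableAt),
        deriv_fun_mul differentiableAt_fun_id hdz.differentiableAt, deriv_id'']
      ring
    filter_upwards [h1, h2] with z e1 e2
    rw [e1, e2]
  have r2 : deriv (deriv F) 0 = 2 * deriv h 0 := by
    have := hF''ev.self_of_nhds
    simpa using this
  have r3 : deriv (deriv (deriv F)) 0 = 3 * deriv (deriv h) 0 := by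
    have h1 : deriv (deriv (deriv F)) 0
        = deriv (fun z => 2 * deriv h z + z * deriv (deriv h) z) 0 :=
      Filter.EventuallyEq.deriv_eq hF''ev
    have hd : HasDerivAt (fun z => 2 * deriv h z + z * deriv (deriv h) z)
        (2 * deriv (deriv h) 0 + (1 * deriv (deriv h) 0 + 0 * deriv (deriv (deriv h)) 0)) 0 :=
      ((hda hhd).const_mul 2).add ((hasDerivAt_id 0).mul (hda hhd2))
    rw [h1, hd.deriv]
    ring
  -- Φ
  set Φ : ℂ → ℂ := fun z =>
    X * ((1 - (lam:ℂ)) * h z ^ c + (lam:ℂ) * deriv F z * h z ^ (c - 1)) with hΦdef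
  have hPΦ : P =ᶠ[𝓝 (0:ℂ)] Φ := by
    have h0 : P 0 = Φ 0 := by
      rw [hP0, hΦdef]
      simp only [hh0, hF1, Complex.one_cpow, mul_one]
      ring
    filter_upwards [heq] with z hz
    rcases eq_or_ne z 0 with rfl | hz0
    · exact h0
    · have hFz : F z / z = h z := by rw [hzh z]; field_simp
      rw [← hz hz0, hΦdef]
      simp only [hFz]
  set Φ₁ : ℂ → ℂ := fun z =>
    X * ((1 - (lam:ℂ)) * (c * h z ^ (c-1) * deriv h z) +
      (((lam:ℂ) * deriv (deriv F) z) * h z ^ (c-1) +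
        ((lam:ℂ) * deriv F z) * ((c-1) * h z ^ (c-1-1) * deriv h z))) with hΦ₁def
  have hΦ'ev : ∀ᶠ z in 𝓝 (0:ℂ), deriv Φ z = Φ₁ z := by
    filter_upwards [evA, evslit, evF] with z hz hsz hFz
    have hdz : AnalyticAt ℂ (deriv F) z := aderiv hFz
    have t1 : HasDerivAt (fun w => h w ^ c) (c * h z ^ (c-1) * deriv h z) z :=
      (hda hz).cpow_const hsz
    have t2 : HasDerivAt (fun w => h w ^ (c-1)) ((c-1) * h z ^ (c-1-1) * deriv h z) z :=
      (hda hz).cpow_const hsz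
    have t3 : HasDerivAt (deriv F) (deriv (deriv F) z) z := hda hdz
    have tA : HasDerivAt (fun w => (1 - (lam:ℂ)) * h w ^ c)
        ((1 - (lam:ℂ)) * (c * h z ^ (c-1) * deriv h z)) z := t1.const_mul _
    have tB : HasDerivAt (fun w => ((lam:ℂ) * deriv F w) * h w ^ (c-1))
        (((lam:ℂ) * deriv (deriv F) z) * h z ^ (c-1) +
          ((lam:ℂ) * deriv F z) * ((c-1) * h z ^ (c-1-1) * deriv h z)) z :=
      (t3.const_mul _).mul t2
    have tall : HasDerivAt Φ (Φ₁ z) z := by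
      rw [hΦdef, hΦ₁def]
      exact (tA.add tB).const_mul X
    exact tall.deriv
  have key1 : deriv (deriv P) 0 = deriv Φ₁ 0 :=
    Filter.EventuallyEq.deriv_eq ((Filter.EventuallyEq.deriv hPΦ).trans hΦ'ev)
  -- compute deriv Φ₁ 0
  have hslit0 : h 0 ∈ Complex.slitPlane := by
    rw [hh0]; exact Complex.one_mem_slitPlane
  have u1 : HasDerivAt (fun w => h w ^ (c-1)) ((c-1) * h 0 ^ (c-1-1) * deriv h 0) 0 :=
    (hda hh).cpow_const hslit0
  have u2 : HasDerivAt (fun w => h w ^ (c-1-1)) ((c-1-1) * h 0 ^ (c-1-1-1) * deriv h 0) 0 :=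
    (hda hh).cpow_const hslit0
  have hdF : AnalyticAt ℂ (deriv F) 0 := aderiv hF
  have hddF : AnalyticAt ℂ (deriv (deriv F)) 0 := aderiv hdF
  have tA : HasDerivAt (fun z => (1 - (lam:ℂ)) * (c * h z ^ (c-1) * deriv h z))
      ((1 - (lam:ℂ)) * (((c * ((c-1) * h 0 ^ (c-1-1) * deriv h 0)) * deriv h 0)
        + (c * h 0 ^ (c-1)) * deriv (deriv h) 0)) 0 :=
    (((u1.const_mul c).mul (hda hhd))).const_mul _
  have tB1 : HasDerivAt (fun z => ((lam:ℂ) * deriv (deriv F) z) * h z ^ (c-1))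
      (((lam:ℂ) * deriv (deriv (deriv F)) 0) * h 0 ^ (c-1)
        + ((lam:ℂ) * deriv (deriv F) 0) * ((c-1) * h 0 ^ (c-1-1) * deriv h 0)) 0 :=
    ((hda hddF).const_mul _).mul u1
  have tB2 : HasDerivAt
      (fun z => ((lam:ℂ) * deriv F z) * ((c-1) * h z ^ (c-1-1) * deriv h z))
      (((lam:ℂ) * deriv (deriv F) 0) * ((c-1) * h 0 ^ (c-1-1) * deriv h 0)
        + ((lam:ℂ) * deriv F 0) *
          ((((c-1) * ((c-1-1) * h 0 ^ (c-1-1-1) * deriv h 0)) * deriv h 0)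
            + ((c-1) * h 0 ^ (c-1-1)) * deriv (deriv h) 0)) 0 :=
    ((hda hdF).const_mul _).mul (((u2.const_mul _).mul (hda hhd)))
  have tall : HasDerivAt Φ₁
      (X * (((1 - (lam:ℂ)) * (((c * ((c-1) * h 0 ^ (c-1-1) * deriv h 0)) * deriv h 0)
        + (c * h 0 ^ (c-1)) * deriv (deriv h) 0))
        + ((((lam:ℂ) * deriv (deriv (deriv F)) 0) * h 0 ^ (c-1)
        + ((lam:ℂ) * deriv (deriv F) 0) * ((c-1) * h 0 ^ (c-1-1) * deriv h 0))
        + (((lam:ℂ) * deriv (deriv F) 0) * ((c-1) * h 0 ^ (c-1-1) * deriv h 0)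
        + ((lam:ℂ) * deriv F 0) *
          ((((c-1) * ((c-1-1) * h 0 ^ (c-1-1-1) * deriv h 0)) * deriv h 0)
            + ((c-1) * h 0 ^ (c-1-1)) * deriv (deriv h) 0))))) 0 := by
    rw [hΦ₁def]
    exact (tA.add (tB1.add tB2)).const_mul X
  rw [key1, tall.deriv, hh0, hF1, r2, r3]
  simp only [Complex.one_cpow]
  ring


private lemma inv_derivs (f g : ℂ → ℂ) (hf : AnalyticAt ℂ f 0) (hg : AnalyticAt ℂ g 0)
    (hg0 : g 0 = 0) (hf1 : deriv f 0 = 1) (hfg : ∀ᶠ w in 𝓝 (0:ℂ), f (g w) = w) :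
    deriv g 0 = 1 ∧ deriv (deriv g) 0 = - deriv (deriv f) 0 ∧
      deriv (deriv (deriv g)) 0 = 3 * (deriv (deriv f) 0)^2 - deriv (deriv (deriv f)) 0 := by
  have tg : Filter.Tendsto g (𝓝 (0:ℂ)) (𝓝 (0:ℂ)) := by
    have := hg.continuousAt
    rwa [ContinuousAt, hg0] at this
  have evg : ∀ᶠ w in 𝓝 (0:ℂ), AnalyticAt ℂ g w := hg.eventually_analyticAt
  have evfg : ∀ᶠ w in 𝓝 (0:ℂ), AnalyticAt ℂ f (g w) := tg.eventually hf.eventually_analyticAt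
  have e1 : ∀ᶠ w in 𝓝 (0:ℂ), deriv f (g w) * deriv g w = 1 := by
    have d1 : deriv (fun w => f (g w)) =ᶠ[𝓝 (0:ℂ)] deriv (fun w : ℂ => w) :=
      Filter.EventuallyEq.deriv hfg
    have d2 : ∀ᶠ w in 𝓝 (0:ℂ), deriv (fun w => f (g w)) w = deriv f (g w) * deriv g w := by
      filter_upwards [evg, evfg] with w hgw hfgw
      exact deriv_comp w hfgw.differentiableAt hgw.differentiableAt
    filter_upwards [d1, d2] with w h1 h2
    rw [← h2, h1, deriv_id'']
  have hg1 : deriv g 0 = 1 := by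
    have := e1.self_of_nhds
    rwa [hg0, hf1, one_mul] at this
  have e2 : ∀ᶠ w in 𝓝 (0:ℂ), deriv (fun w => deriv f (g w) * deriv g w) w
      = deriv (deriv f) (g w) * deriv g w * deriv g w + deriv f (g w) * deriv (deriv g) w := by
    filter_upwards [evg, evfg] with w hgw hfgw
    have h1 : HasDerivAt (fun w => deriv f (g w)) (deriv (deriv f) (g w) * deriv g w) w :=
      (hda (aderiv hfgw)).comp w (hda hgw)
    have h2 : HasDerivAt (deriv g) (deriv (deriv g) w) w := hda (aderiv hgw)
    exact (h1.mul h2).deriv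
  have r2 : deriv (deriv g) 0 = - deriv (deriv f) 0 := by
    have d0 : deriv (fun w => deriv f (g w) * deriv g w) 0 = deriv (fun _ : ℂ => (1:ℂ)) 0 :=
      Filter.EventuallyEq.deriv_eq e1
    have d1 := e2.self_of_nhds
    rw [d0, deriv_const] at d1
    rw [hg0, hg1, hf1] at d1
    linear_combination -d1
  have r3 : deriv (deriv (deriv g)) 0
      = 3 * (deriv (deriv f) 0)^2 - deriv (deriv (deriv f)) 0 := by
    have d1 : deriv (deriv (fun w => deriv f (g w) * deriv g w)) 0 = 0 := by
      have e1' : deriv (fun w => deriv f (g w) * deriv g w) =ᶠ[𝓝 (0:ℂ)]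
          (fun _ : ℂ => (0:ℂ)) := by
        have := Filter.EventuallyEq.deriv (f₁ := fun w => deriv f (g w) * deriv g w)
          (f := fun _ : ℂ => (1:ℂ)) e1
        simpa using this
      rw [Filter.EventuallyEq.deriv_eq e1', deriv_const]
    have d2 : deriv (deriv (fun w => deriv f (g w) * deriv g w)) 0
        = deriv (fun w => deriv (deriv f) (g w) * deriv g w * deriv g w
            + deriv f (g w) * deriv (deriv g) w) 0 :=
      Filter.EventuallyEq.deriv_eq e2
    have hgd : HasDerivAt g (deriv g 0) 0 := hda hg
    have hf2 : HasDerivAt (deriv (deriv f)) (deriv (deriv (deriv f)) 0) (g 0) := by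
      rw [hg0]; exact hda (aderiv (aderiv hf))
    have hf1' : HasDerivAt (deriv f) (deriv (deriv f) 0) (g 0) := by
      rw [hg0]; exact hda (aderiv hf)
    have h1 : HasDerivAt (fun w => deriv (deriv f) (g w))
        (deriv (deriv (deriv f)) 0 * deriv g 0) 0 := hf2.comp 0 hgd
    have hfd1 : HasDerivAt (fun w => deriv f (g w)) (deriv (deriv f) 0 * deriv g 0) 0 := by
      exact hf1'.comp 0 hgd
    have hdg : HasDerivAt (deriv g) (deriv (deriv g) 0) 0 := hda (aderiv hg)
    have hddg : HasDerivAt (deriv (deriv g)) (deriv (deriv (deriv g)) 0) 0 :=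
      hda (aderiv (aderiv hg))
    have tall := ((h1.fun_mul hdg).fun_mul hdg).fun_add (hfd1.fun_mul hddg)
    have d3 := tall.deriv
    rw [← d2, d1] at d3
    rw [hg0, hg1, hf1, r2] at d3
    linear_combination -d3
  exact ⟨hg1, r2, r3⟩



private lemma final_algebra (A B X C L M : ℂ) (hX : X ≠ 0) (hC : C ≠ 0)
    (hT : (1 + M) ≠ 0) (hS : (2*L + M) ≠ 0)
    (P Q : ℂ)
    (hP : P = X * ((2*L+M) * B / 3 + (M-1)*(2*L+M)*(A/2)^2) / C)
    (hQ : Q = X * ((2*L+M) * (3*A^2 - B) / 3 + (M-1)*(2*L+M)*(-A/2)^2) / C) :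
    B / 6 = X⁻¹ * (P/2 + Q/2) * C / ((1+M)*(2*L+M))
      + X⁻¹ * (P/2 - Q/2) * C / (2*(2*L+M)) := by
  have h1 : P + Q = X * ((2*L+M)*(1+M)*A^2/2) / C := by
    subst hP hQ; field_simp; ring
  have h2 : P - Q = X * ((2*L+M)*(2*B - 3*A^2)/3) / C := by
    subst hP hQ; field_simp; ring
  have h3 : P/2 + Q/2 = (P+Q)/2 := by ring
  have h4 : P/2 - Q/2 = (P-Q)/2 := by ring
  have e1 : X⁻¹ * (X * ((2*L+M)*(1+M)*A^2/2) / C / 2) * C / ((1+M)*(2*L+M)) = A^2/4 := by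
    field_simp; ring
  have e2 : X⁻¹ * (X * ((2*L+M)*(2*B-3*A^2)/3) / C / 2) * C / (2*(2*L+M))
      = (2*B-3*A^2)/12 := by
    field_simp; ring
  rw [h3, h4, h1, h2, e1, e2]
  ring

/-- For `f` in the class `NP^{μ,λ}_Σ(β,h)` with associated functions `p` and `q`,
one has `a₃ = e^{−iβ}(p₂+q₂)cos β / ((1+μ)(2λ+μ)) + e^{−iβ}(p₂−q₂)cos β / (2(2λ+μ))`. -/
theorem coeff_relation_a3
    (β lam μ : ℝ) (hβ : β ∈ Set.Ioo (-(π / 2)) (π / 2)) (hlam : 1 ≤ lam) (hμ : 0 ≤ μ)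
    (f g p q : ℂ → ℂ)
    -- `f` is bi-univalent with inverse extension `g`.
    (hf_an : AnalyticOnNhd ℂ f (ball 0 1)) (hf0 : f 0 = 0) (hf1 : deriv f 0 = 1)
    (hf_inj : Set.InjOn f (ball 0 1))
    (hg_an : AnalyticOnNhd ℂ g (ball 0 1)) (hg_inj : Set.InjOn g (ball 0 1))
    (hg0 : g 0 = 0) (hfg : ∀ᶠ w in nhds (0 : ℂ), f (g w) = w)
    (hp_an : AnalyticOnNhd ℂ p (ball 0 1)) (hp0 : p 0 = 1)
    (hq_an : AnalyticOnNhd ℂ q (ball 0 1)) (hq0 : q 0 = 1)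
    (heq_p : ∀ z ∈ ball (0 : ℂ) 1, z ≠ 0 →
      Complex.exp (Complex.I * β) *
        ((1 - (lam : ℂ)) * (f z / z) ^ (μ : ℂ) +
          (lam : ℂ) * deriv f z * (f z / z) ^ ((μ : ℂ) - 1))
      = p z * (Real.cos β : ℂ) + Complex.I * (Real.sin β : ℂ))
    (heq_q : ∀ w ∈ ball (0 : ℂ) 1, w ≠ 0 →
      Complex.exp (Complex.I * β) *
        ((1 - (lam : ℂ)) * (g w / w) ^ (μ : ℂ) +
          (lam : ℂ) * deriv g w * (g w / w) ^ ((μ : ℂ) - 1))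
      = q w * (Real.cos β : ℂ) + Complex.I * (Real.sin β : ℂ)) :
    iteratedDeriv 3 f 0 / 6 =
      Complex.exp (-(Complex.I * β)) * (iteratedDeriv 2 p 0 / 2 + iteratedDeriv 2 q 0 / 2) *
        (Real.cos β : ℂ) / ((1 + (μ : ℂ)) * (2 * (lam : ℂ) + (μ : ℂ))) +
      Complex.exp (-(Complex.I * β)) * (iteratedDeriv 2 p 0 / 2 - iteratedDeriv 2 q 0 / 2) *
        (Real.cos β : ℂ) / (2 * (2 * (lam : ℂ) + (μ : ℂ))) := by
  have h0mem : (0:ℂ) ∈ ball (0:ℂ) 1 := mem_ball_self one_pos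
  have hfa : AnalyticAt ℂ f 0 := hf_an 0 h0mem
  have hga : AnalyticAt ℂ g 0 := hg_an 0 h0mem
  have hpa : AnalyticAt ℂ p 0 := hp_an 0 h0mem
  have hqa : AnalyticAt ℂ q 0 := hq_an 0 h0mem
  obtain ⟨hg1, hb2, hb3⟩ := inv_derivs f g hfa hga hg0 hf1 hfg
  have hballn : ball (0:ℂ) 1 ∈ 𝓝 (0:ℂ) := ball_mem_nhds _ one_pos
  -- P side
  have hP0 : (fun z => p z * (Real.cos β : ℂ) + Complex.I * (Real.sin β : ℂ)) 0
      = Complex.exp (Complex.I * β) := by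
    simp only
    rw [hp0, mul_comm Complex.I (β:ℂ), Complex.exp_mul_I, ← Complex.ofReal_cos,
      ← Complex.ofReal_sin]
    ring
  have hQ0 : (fun z => q z * (Real.cos β : ℂ) + Complex.I * (Real.sin β : ℂ)) 0
      = Complex.exp (Complex.I * β) := by
    simp only
    rw [hq0, mul_comm Complex.I (β:ℂ), Complex.exp_mul_I, ← Complex.ofReal_cos,
      ← Complex.ofReal_sin]
    ring
  have heqP : ∀ᶠ z in 𝓝 (0:ℂ), z ≠ 0 →
      Complex.exp (Complex.I * β) *
        ((1 - (lam : ℂ)) * (f z / z) ^ (μ : ℂ) +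
          (lam : ℂ) * deriv f z * (f z / z) ^ ((μ : ℂ) - 1))
      = (fun z => p z * (Real.cos β : ℂ) + Complex.I * (Real.sin β : ℂ)) z := by
    filter_upwards [hballn] with z hz hz0
    exact heq_p z hz hz0
  have heqQ : ∀ᶠ w in 𝓝 (0:ℂ), w ≠ 0 →
      Complex.exp (Complex.I * β) *
        ((1 - (lam : ℂ)) * (g w / w) ^ (μ : ℂ) +
          (lam : ℂ) * deriv g w * (g w / w) ^ ((μ : ℂ) - 1))
      = (fun w => q w * (Real.cos β : ℂ) + Complex.I * (Real.sin β : ℂ)) w := by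
    filter_upwards [hballn] with w hw hw0
    exact heq_q w hw hw0
  have e1 := side β lam μ f _ hfa hf0 hf1 hP0 heqP
  have e2 := side β lam μ g _ hga hg0 hg1 hQ0 heqQ
  -- second derivative of the affine transforms
  have hP2 : deriv (deriv (fun z => p z * (Real.cos β : ℂ) + Complex.I * (Real.sin β : ℂ))) 0
      = deriv (deriv p) 0 * (Real.cos β : ℂ) := by
    have ev : ∀ᶠ z in 𝓝 (0:ℂ),
        deriv (fun z => p z * (Real.cos β : ℂ) + Complex.I * (Real.sin β : ℂ)) z
          = deriv p z * (Real.cos β : ℂ) := by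
      filter_upwards [hpa.eventually_analyticAt] with z hz
      rw [deriv_add_const, deriv_mul_const hz.differentiableAt]
    rw [Filter.EventuallyEq.deriv_eq ev, deriv_mul_const (aderiv hpa).differentiableAt]
  have hQ2 : deriv (deriv (fun w => q w * (Real.cos β : ℂ) + Complex.I * (Real.sin β : ℂ))) 0
      = deriv (deriv q) 0 * (Real.cos β : ℂ) := by
    have ev : ∀ᶠ z in 𝓝 (0:ℂ),
        deriv (fun w => q w * (Real.cos β : ℂ) + Complex.I * (Real.sin β : ℂ)) z
          = deriv q z * (Real.cos β : ℂ) := by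
      filter_upwards [hqa.eventually_analyticAt] with z hz
      rw [deriv_add_const, deriv_mul_const hz.differentiableAt]
    rw [Filter.EventuallyEq.deriv_eq ev, deriv_mul_const (aderiv hqa).differentiableAt]
  rw [hP2] at e1
  rw [hQ2] at e2
  rw [hb2, hb3] at e2
  -- nonvanishing facts
  have hcos : ((Real.cos β : ℝ) : ℂ) ≠ 0 := by
    exact_mod_cast ne_of_gt (Real.cos_pos_of_mem_Ioo hβ)
  have hS : (2 * (lam:ℂ) + (μ:ℂ)) ≠ 0 := by
    have h1 : (0:ℝ) < 2 * lam + μ := by linarith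
    have h2 : (2 * (lam:ℂ) + (μ:ℂ)) = ((2 * lam + μ : ℝ) : ℂ) := by push_cast; ring
    rw [h2]
    exact_mod_cast ne_of_gt h1
  have hT : (1 + (μ:ℂ)) ≠ 0 := by
    have h1 : (0:ℝ) < 1 + μ := by linarith
    have h2 : (1 + (μ:ℂ)) = ((1 + μ : ℝ) : ℂ) := by push_cast; ring
    rw [h2]
    exact_mod_cast ne_of_gt h1
  have hX : Complex.exp (Complex.I * β) ≠ 0 := Complex.exp_ne_zero _
  -- rewrite iterated derivatives
  have i3 : iteratedDeriv 3 f 0 = deriv (deriv (deriv f)) 0 := by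
    rw [iteratedDeriv_eq_iterate]; rfl
  have i2p : iteratedDeriv 2 p 0 = deriv (deriv p) 0 := by
    rw [iteratedDeriv_eq_iterate]; rfl
  have i2q : iteratedDeriv 2 q 0 = deriv (deriv q) 0 := by
    rw [iteratedDeriv_eq_iterate]; rfl
  have hPv : deriv (deriv p) 0 = Complex.exp (Complex.I * β) *
      ((2 * (lam:ℂ) + (μ:ℂ)) * deriv (deriv (deriv f)) 0 / 3
        + ((μ:ℂ) - 1) * (2 * (lam:ℂ) + (μ:ℂ)) * (deriv (deriv f) 0 / 2) ^ 2)
      / (Real.cos β : ℂ) := (eq_div_iff hcos).mpr e1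
  have hQv : deriv (deriv q) 0 = Complex.exp (Complex.I * β) *
      ((2 * (lam:ℂ) + (μ:ℂ)) * (3 * (deriv (deriv f) 0)^2 - deriv (deriv (deriv f)) 0) / 3
        + ((μ:ℂ) - 1) * (2 * (lam:ℂ) + (μ:ℂ)) * (-(deriv (deriv f) 0) / 2) ^ 2)
      / (Real.cos β : ℂ) := (eq_div_iff hcos).mpr e2
  rw [i3, i2p, i2q, Complex.exp_neg]
  exact final_algebra (deriv (deriv f) 0) (deriv (deriv (deriv f)) 0)
    (Complex.exp (Complex.I * β)) ((Real.cos β : ℂ)) (lam : ℂ) (μ : ℂ)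
    hX hcos hT hS _ _ hPv hQv
end
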